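/- arXiv:0704.3565 — 15 statements merged into one kernel-verified Lean document; each statement's English description precedes it below -/
import Mathlib

section
/- If a permutation π of {1,...,n} contains an occurrence of the generalized pattern 21-3 (i.e., there exist indices i and k with i+1 < k such that π(i+1) < π(i) < π(k)), then π also contains an occurrence of the generalized pattern 2-13 (i.e., there exist indices i < j with j+1 ≤ n such that π(j) < π(i) < π(j+1)). -/
theorem stmt_0 (n : ℕ) (π : ℕ → ℕ)
    (hπ : Set.BijOn π (Set.Icc 1 n) (Set.Icc 1 n))
    (h : ∃ i k : ℕ, 1 ≤ i ∧ i + 1 < k ∧ k ≤ n ∧ π (i+1) < π i ∧ π i < π k) :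
    ∃ i j : ℕ, 1 ≤ i ∧ i < j ∧ j + 1 ≤ n ∧ π j < π i ∧ π i < π (j+1) := by
  obtain ⟨i, k, hi1, hik, hkn, h1, h2⟩ := h
  set P : ℕ → Prop := fun m => i + 1 ≤ m ∧ π m < π i with hP
  have hPdec : DecidablePred P := fun m => instDecidableAnd
  set j := Nat.findGreatest P (k - 1) with hj
  have hPi1 : P (i + 1) := ⟨le_refl _, h1⟩
  have hi1k : i + 1 ≤ k - 1 := by omega
  have hspec : P j := Nat.findGreatest_spec (le_trans (by omega) hi1k) hPi1
  have hjle : j ≤ k - 1 := Nat.findGreatest_le _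
  obtain ⟨hji, hjv⟩ := hspec
  have hinj := hπ.injOn
  have hπi : i ∈ Set.Icc 1 n := ⟨hi1, by omega⟩
  rcases eq_or_lt_of_le (show j + 1 ≤ k by omega) with heq | hlt
  · exact ⟨i, j, hi1, by omega, by omega, hjv, heq ▸ h2⟩
  · -- j + 1 ≤ k - 1, so by maximality ¬ P (j+1), hence π (j+1) ≥ π i
    have hng : ¬ P (j + 1) :=
      Nat.findGreatest_is_greatest (show j < j + 1 by omega) (show j + 1 ≤ k - 1 by omega)
    have hge : π i ≤ π (j + 1) := by
      by_contra hc
      exact hng ⟨by omega, lt_of_not_ge hc⟩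
    have hne : π (j + 1) ≠ π i := fun he => by
      have : j + 1 = i := hinj ⟨by omega, by omega⟩ hπi he
      omega
    exact ⟨i, j, hi1, by omega, by omega, hjv, lt_of_le_of_ne hge (Ne.symm hne)⟩
end

section
/- If a permutation π of {1,...,n} contains an occurrence of the generalized pattern 23-1 (indices i, k with i+1 < k and π(k) < π(i) < π(i+1)), then π contains an occurrence of the generalized pattern 2-31 (indices i < j with j+1 ≤ n and π(j+1) < π(i) < π(j)). -/
theorem stmt_1 (n : ℕ) (π : ℕ → ℕ)
    (hπ : Set.BijOn π (Set.Icc 1 n) (Set.Icc 1 n))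
    (h : ∃ i k : ℕ, 1 ≤ i ∧ i + 1 < k ∧ k ≤ n ∧ π k < π i ∧ π i < π (i+1)) :
    ∃ i j : ℕ, 1 ≤ i ∧ i < j ∧ j + 1 ≤ n ∧ π (j+1) < π i ∧ π i < π j := by
  obtain ⟨i, k, hi1, hik, hkn, hki, hii⟩ := h
  -- least t ≥ 1 with π (i+1+t) < π i ; t = k - (i+1) works
  have hex : ∃ t, π (i + 1 + t) < π i := by
    refine ⟨k - (i+1), ?_⟩
    have : i + 1 + (k - (i+1)) = k := by omega
    rw [this]; exact hki
  classical
  set m := Nat.find hex with hm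
  have hPm : π (i + 1 + m) < π i := Nat.find_spec hex
  have hm1 : 1 ≤ m := by
    rcases Nat.eq_zero_or_pos m with h0 | h; · exfalso; rw [h0] at hPm; simp at hPm; omega
    · exact h
  -- m bound: m ≤ k - (i+1) because Nat.find is least
  have hmle : m ≤ k - (i+1) := by
    apply Nat.find_le
    have : i + 1 + (k - (i+1)) = k := by omega
    rw [this]; exact hki
  refine ⟨i, i + m, hi1, by omega, by omega, ?_, ?_⟩
  · have : i + m + 1 = i + 1 + m := by omega
    rw [this]; exact hPm
  · -- π (i+m) > π i
    have hnot : ¬ π (i + 1 + (m - 1)) < π i := Nat.find_min hex (by omega)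
    have heq : i + 1 + (m - 1) = i + m := by omega
    rw [heq] at hnot
    have hneq : π (i + m) ≠ π i := by
      intro hcontra
      have him : i + m ∈ Set.Icc 1 n := by simp; omega
      have hii' : i ∈ Set.Icc 1 n := by simp; omega
      have := hπ.injOn him hii' hcontra
      omega
    omega
end

section
/- If a permutation π of {1,...,n} contains an occurrence of the generalized pattern 1-32 (indices i < j with j+1 ≤ n and π(i) < π(j+1) < π(j)), then π contains an occurrence of the generalized pattern 13-2 (indices i, k with i+1 < k and π(i) < π(k) < π(i+1)). -/
/-- Discrete intermediate value: if `P i` holds and `P j` fails with `i < j`,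
there is a crossing point. -/
lemma crossing (P : ℕ → Prop) (i j : ℕ) (hij : i < j) (hi : P i) (hj : ¬ P j) :
    ∃ a, i ≤ a ∧ a < j ∧ P a ∧ ¬ P (a+1) := by
  induction j with
  | zero => omega
  | succ m ih =>
    by_cases hm : P m
    · exact ⟨m, by omega, by omega, hm, hj⟩
    · rcases Nat.lt_or_ge i m with h' | h'
      · rcases ih h' hm with ⟨a, ha1, ha2, ha3, ha4⟩
        exact ⟨a, ha1, by omega, ha3, ha4⟩
      · have : i = m := by omega
        exact absurd (this ▸ hi) hm

theorem stmt_2 (n : ℕ) (π : ℕ → ℕ)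
    (hπ : Set.BijOn π (Set.Icc 1 n) (Set.Icc 1 n))
    (h : ∃ i j : ℕ, 1 ≤ i ∧ i < j ∧ j + 1 ≤ n ∧ π i < π (j+1) ∧ π (j+1) < π j) :
    ∃ i k : ℕ, 1 ≤ i ∧ i + 1 < k ∧ k ≤ n ∧ π i < π k ∧ π k < π (i+1) := by
  obtain ⟨i, j, hi1, hij, hjn, h1, h2⟩ := h
  obtain ⟨a, hia, haj, ha, ha1⟩ :=
    crossing (fun a => π a < π (j+1)) i j hij h1 (by simpa using le_of_lt h2)
  push_neg at ha1
  refine ⟨a, j+1, by omega, by omega, hjn, ha, ?_⟩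
  rcases lt_or_eq_of_le ha1 with h' | h'
  · exact h'
  · exfalso
    have hne : a + 1 ≠ j + 1 := by
      intro heq
      have : a = j := by omega
      omega
    exact hne (hπ.injOn ⟨by omega, by omega⟩ ⟨by omega, hjn⟩ h'.symm)
end

section
/- If a permutation π of {1,...,n} contains an occurrence of the generalized pattern 3-12 (indices i < j with j+1 ≤ n and π(j) < π(j+1) < π(i)), then π contains an occurrence of the generalized pattern 31-2 (indices i, k with i+1 < k and π(i+1) < π(k) < π(i)). -/
theorem stmt_3 (n : ℕ) (π : ℕ → ℕ)
    (hπ : Set.BijOn π (Set.Icc 1 n) (Set.Icc 1 n))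
    (h : ∃ i j : ℕ, 1 ≤ i ∧ i < j ∧ j + 1 ≤ n ∧ π j < π (j+1) ∧ π (j+1) < π i) :
    ∃ i k : ℕ, 1 ≤ i ∧ i + 1 < k ∧ k ≤ n ∧ π (i+1) < π k ∧ π k < π i := by
  obtain ⟨i, j, hi, hij, hjn, h1, h2⟩ := h
  have hQ : ∃ m, π (i + m) < π (j + 1) := ⟨j - i, by rwa [Nat.add_sub_cancel' hij.le]⟩
  classical
  set m := Nat.find hQ with hm
  have hspec : π (i + m) < π (j + 1) := Nat.find_spec hQ
  have hmle : m ≤ j - i := Nat.find_le (by rwa [Nat.add_sub_cancel' hij.le])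
  have hm0 : 0 < m := by
    rcases Nat.eq_zero_or_pos m with h0 | h0
    · exfalso; have := hspec; rw [h0, Nat.add_zero] at this; omega
    · exact h0
  have hmin : ¬ π (i + (m - 1)) < π (j + 1) := Nat.find_min hQ (by omega)
  refine ⟨i + (m - 1), j + 1, by omega, by omega, hjn, ?_, ?_⟩
  · have : i + (m - 1) + 1 = i + m := by omega
    rw [this]; exact hspec
  · have hne : π (i + (m - 1)) ≠ π (j + 1) := by
      intro he
      have h1' : i + (m - 1) ∈ Set.Icc 1 n := by constructor <;> omega
      have h2' : j + 1 ∈ Set.Icc 1 n := by constructor <;> omega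
      have := hπ.injOn h1' h2' he
      omega
    omega
end

section
/- If a permutation π of {1,...,n} avoids both generalized patterns 1-23 (no i < j with π(i) < π(j) < π(j+1)) and 2-13 (no i < j with π(j) < π(i) < π(j+1)), then π also avoids the pattern 12-3 (no i and k with i+1 < k and π(i) < π(i+1) < π(k)). -/
theorem stmt_4 (n : ℕ) (π : ℕ → ℕ)
    (hπ : Set.BijOn π (Set.Icc 1 n) (Set.Icc 1 n))
    (h1 : ¬ (∃ i j : ℕ, 1 ≤ i ∧ i < j ∧ j + 1 ≤ n ∧ π i < π j ∧ π j < π (j+1))) (h2 : ¬ (∃ i j : ℕ, 1 ≤ i ∧ i < j ∧ j + 1 ≤ n ∧ π j < π i ∧ π i < π (j+1))) :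
    ¬ (∃ i k : ℕ, 1 ≤ i ∧ i + 1 < k ∧ k ≤ n ∧ π i < π (i+1) ∧ π (i+1) < π k) := by
  rintro ⟨i, k, hi1, hik, hkn, hab, hbc⟩
  set S : Finset ℕ := (Finset.Icc (i+1) (k-1)).filter (fun j => π j < π k) with hS
  have hne : S.Nonempty := ⟨i+1, by
    simp only [hS, Finset.mem_filter, Finset.mem_Icc]
    exact ⟨⟨le_refl _, by omega⟩, hbc⟩⟩
  obtain ⟨j, hjmem, hjmax⟩ : ∃ j ∈ S, ∀ x ∈ S, x ≤ j :=
    ⟨S.max' hne, S.max'_mem hne, fun x hx => S.le_max' x hx⟩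
  simp only [hS, Finset.mem_filter, Finset.mem_Icc] at hjmem
  obtain ⟨⟨hij, hjk⟩, hjlt⟩ := hjmem
  have hkle : π k ≤ π (j+1) := by
    rcases eq_or_lt_of_le (show j+1 ≤ k by omega) with h | h
    · rw [h]
    · by_contra hlt
      push_neg at hlt
      have hmem : j+1 ∈ S := by
        simp only [hS, Finset.mem_filter, Finset.mem_Icc]
        exact ⟨⟨by omega, by omega⟩, hlt⟩
      have := hjmax _ hmem
      omega
  rcases lt_trichotomy (π i) (π j) with h | h | h
  · exact h1 ⟨i, j, hi1, by omega, by omega, h, lt_of_lt_of_le hjlt hkle⟩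
  · have : i = j := hπ.injOn ⟨hi1, by omega⟩ ⟨by omega, by omega⟩ h
    omega
  · exact h2 ⟨i, j, hi1, by omega, by omega, h,
      lt_of_lt_of_le (lt_trans hab hbc) hkle⟩
end

section
/- If a permutation π of {1,...,n} avoids both generalized patterns 1-23 (no i < j with π(i) < π(j) < π(j+1)) and 21-3 (no i, k with i+1 < k and π(i+1) < π(i) < π(k)), then π avoids the pattern 12-3 (no i, k with i+1 < k and π(i) < π(i+1) < π(k)). -/
theorem stmt_5 (n : ℕ) (π : ℕ → ℕ)
    (hπ : Set.BijOn π (Set.Icc 1 n) (Set.Icc 1 n))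
    (h1 : ¬ (∃ i j : ℕ, 1 ≤ i ∧ i < j ∧ j + 1 ≤ n ∧ π i < π j ∧ π j < π (j+1))) (h2 : ¬ (∃ i k : ℕ, 1 ≤ i ∧ i + 1 < k ∧ k ≤ n ∧ π (i+1) < π i ∧ π i < π k)) :
    ¬ (∃ i k : ℕ, 1 ≤ i ∧ i + 1 < k ∧ k ≤ n ∧ π i < π (i+1) ∧ π (i+1) < π k) := by
  rintro ⟨i, k, hi, hik, hkn, ha, hb⟩
  -- i+2 ≤ k ≤ n
  have hik2 : i + 2 ≤ k := hik
  have h2n : i + 2 ≤ n := le_trans hik2 hkn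
  -- from h1 with j = i+1: ¬ π(i+1) < π(i+2)
  have hnot : ¬ π (i+1) < π (i+2) := by
    intro hc
    exact h1 ⟨i, i+1, hi, Nat.lt_succ_self i, by omega, ha, by simpa [Nat.add_assoc] using hc⟩
  rcases eq_or_lt_of_le hik2 with heq | hlt
  · exact hnot (heq ▸ hb)
  · -- π(i+2) < π(i+1) by injectivity
    have hmem2 : (i+2) ∈ Set.Icc 1 n := ⟨by omega, h2n⟩
    have hmem1 : (i+1) ∈ Set.Icc 1 n := ⟨by omega, by omega⟩
    have hne : π (i+1) ≠ π (i+2) := fun h => by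
      have := hπ.injOn hmem1 hmem2 h; omega
    have hlt2 : π (i+2) < π (i+1) := lt_of_le_of_ne (not_lt.mp hnot) (Ne.symm hne)
    exact h2 ⟨i+1, k, by omega, by omega, hkn, by simpa [Nat.add_assoc] using hlt2, hb⟩
end

section
/- If a permutation π of {1,...,n} avoids both generalized patterns 1-23 (no i < j with π(i) < π(j) < π(j+1)) and 2-31 (no i < j with π(j+1) < π(i) < π(j)), then π avoids the pattern 12-3 (no i, k with i+1 < k and π(i) < π(i+1) < π(k)). -/
theorem stmt_6 (n : ℕ) (π : ℕ → ℕ)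
    (hπ : Set.BijOn π (Set.Icc 1 n) (Set.Icc 1 n))
    (h1 : ¬ (∃ i j : ℕ, 1 ≤ i ∧ i < j ∧ j + 1 ≤ n ∧ π i < π j ∧ π j < π (j+1))) (h2 : ¬ (∃ i j : ℕ, 1 ≤ i ∧ i < j ∧ j + 1 ≤ n ∧ π (j+1) < π i ∧ π i < π j)) :
    ¬ (∃ i k : ℕ, 1 ≤ i ∧ i + 1 < k ∧ k ≤ n ∧ π i < π (i+1) ∧ π (i+1) < π k) := by
  rintro ⟨i, k, hi1, hik, hkn, ha, hb⟩
  have hinj := hπ.injOn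
  have hiIcc : i ∈ Set.Icc 1 n := ⟨hi1, by omega⟩
  -- injectivity: π j ≠ π i for j ≠ i in range
  have hne : ∀ j, i + 1 ≤ j → j ≤ n → π j ≠ π i := by
    intro j hj1 hj2 h
    have : j = i := hinj ⟨by omega, hj2⟩ hiIcc h
    omega
  by_cases hc : ∃ l, l ≤ k - 1 ∧ i + 1 ≤ l ∧ π l < π i
  · -- some value below π i between i+1 and k-1: produces a 2-31 pattern
    obtain ⟨l0, hl0⟩ := hc
    classical
    set P : ℕ → Prop := fun l => l ≤ k - 1 ∧ i + 1 ≤ l ∧ π l < π i with hP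
    have hex : ∃ l, P l := ⟨l0, hl0⟩
    set l := Nat.find hex with hl
    obtain ⟨hlk, hli, hlv⟩ := Nat.find_spec hex
    rw [← hl] at hlk hli hlv
    have hl2 : i + 2 ≤ l := by
      rcases Nat.lt_or_ge l (i + 2) with h | h
      · have heq : l = i + 1 := by omega
        rw [heq] at hlv; omega
      · exact h
    have hm : ¬ P (l - 1) := Nat.find_min hex (by omega)
    have hm2 : π i ≤ π (l - 1) := by
      by_contra h
      exact hm ⟨by omega, by omega, by omega⟩
    have hm3 : π i < π (l - 1) := by
      rcases Nat.lt_or_ge (π i) (π (l - 1)) with h | h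
      · exact h
      · have : π (l - 1) = π i := by omega
        exact absurd this (hne (l - 1) (by omega) (by omega))
    exact h2 ⟨i, l - 1, hi1, by omega, by omega, by
      have : l - 1 + 1 = l := by omega
      rw [this]; exact hlv, hm3⟩
  · -- all values between i+1 and k-1 are above π i: produces a 1-23 pattern
    push_neg at hc
    -- there is an ascent m in [i+1, k-1]
    by_cases hd : ∃ m, i + 1 ≤ m ∧ m ≤ k - 1 ∧ π m < π (m + 1)
    · obtain ⟨m, hm1, hm2, hm3⟩ := hd
      have h4 : π i ≤ π m := hc m hm2 hm1
      have h5 : π i < π m := by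
        rcases Nat.lt_or_ge (π i) (π m) with h | h
        · exact h
        · have : π m = π i := by omega
          exact absurd this (hne m hm1 (by omega))
      exact h1 ⟨i, m, hi1, by omega, by omega, h5, hm3⟩
    · push_neg at hd
      -- then the sequence is nonincreasing from i+1 to k, contradicting π(i+1) < π k
      have key : ∀ d, i + 1 + d ≤ k → π (i + 1 + d) ≤ π (i + 1) := by
        intro d
        induction d with
        | zero => intro _; simp
        | succ d ih =>
          intro hdk
          have h6 := hd (i + 1 + d) (by omega) (by omega)
          have h7 := ih (by omega)
          have : i + 1 + (d + 1) = i + 1 + d + 1 := by omega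
          rw [this]
          omega
      have := key (k - (i + 1)) (by omega)
      have heq : i + 1 + (k - (i + 1)) = k := by omega
      rw [heq] at this
      omega
end

section
/- If a permutation π of {1,...,n} avoids both generalized patterns 1-23 (no i < j with π(i) < π(j) < π(j+1)) and 23-1 (no i, k with i+1 < k and π(k) < π(i) < π(i+1)), then π avoids the pattern 12-3 (no i, k with i+1 < k and π(i) < π(i+1) < π(k)). -/
theorem stmt_7 (n : ℕ) (π : ℕ → ℕ)
    (hπ : Set.BijOn π (Set.Icc 1 n) (Set.Icc 1 n))
    (h1 : ¬ (∃ i j : ℕ, 1 ≤ i ∧ i < j ∧ j + 1 ≤ n ∧ π i < π j ∧ π j < π (j+1))) (h2 : ¬ (∃ i k : ℕ, 1 ≤ i ∧ i + 1 < k ∧ k ≤ n ∧ π k < π i ∧ π i < π (i+1))) :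
    ¬ (∃ i k : ℕ, 1 ≤ i ∧ i + 1 < k ∧ k ≤ n ∧ π i < π (i+1) ∧ π (i+1) < π k) := by
  have key : ∀ k i : ℕ, 1 ≤ i → i + 1 < k → k ≤ n → π i < π (i+1) → π (i+1) < π k → False := by
    intro k
    induction k using Nat.strong_induction_on with
    | _ k ih =>
      intro i hi hik hkn ha hb
      by_cases hc : k = i + 2
      · subst hc
        exact h1 ⟨i, i+1, hi, by omega, by omega, ha, hb⟩
      · have hk3 : i + 2 < k := by omega
        have hkk : k - 1 + 1 = k := by omega
        rcases lt_trichotomy (π (k-1)) (π k) with hlt | heq | hgt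
        · rcases lt_trichotomy (π (k-1)) (π i) with h' | he | h''
          · exact h2 ⟨i, k-1, hi, by omega, by omega, h', ha⟩
          · have := hπ.injOn (Set.mem_Icc.mpr ⟨by omega, by omega⟩)
              (Set.mem_Icc.mpr ⟨by omega, by omega⟩) he
            omega
          · refine h1 ⟨i, k-1, hi, by omega, by omega, h'', ?_⟩
            rw [hkk]; exact hlt
        · have := hπ.injOn (Set.mem_Icc.mpr ⟨by omega, by omega⟩)
            (Set.mem_Icc.mpr ⟨by omega, by omega⟩) heq
          omega
        · exact ih (k-1) (by omega) i hi (by omega) (by omega) ha (hb.trans hgt)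
  rintro ⟨i, k, hi, hik, hkn, ha, hb⟩
  exact key k i hi hik hkn ha hb
end

section
/- Let π be a permutation of {1,...,n} with n ≥ 1 that avoids the patterns 2-31 (no i < j with π(j+1) < π(i) < π(j)) and 1-32 (no i < j with π(i) < π(j+1) < π(j)). Then the maximum value n occurs at the first or last position: π(1) = n or π(n) = n. -/
theorem stmt_8 (n : ℕ) (π : ℕ → ℕ)
    (hπ : Set.BijOn π (Set.Icc 1 n) (Set.Icc 1 n))
    (hn : 1 ≤ n)
    (h1 : ¬ (∃ i j : ℕ, 1 ≤ i ∧ i < j ∧ j + 1 ≤ n ∧ π (j+1) < π i ∧ π i < π j)) (h2 : ¬ (∃ i j : ℕ, 1 ≤ i ∧ i < j ∧ j + 1 ≤ n ∧ π i < π (j+1) ∧ π (j+1) < π j)) :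
    π 1 = n ∨ π n = n := by
  obtain ⟨k, hk, hπk⟩ := hπ.surjOn (show n ∈ Set.Icc 1 n from ⟨hn, le_rfl⟩)
  simp only [Set.mem_Icc] at hk
  by_cases hk1 : k = 1
  · left; rw [← hk1]; exact hπk
  by_cases hkn : k = n
  · right; rw [hkn] at hπk; exact hπk
  -- now 1 < k < n
  exfalso
  have h2k : 2 ≤ k := lt_of_le_of_ne hk.1 (Ne.symm hk1)
  have hkn' : k + 1 ≤ n := Nat.succ_le_of_lt (lt_of_le_of_ne hk.2 hkn)
  have h1mem : (1 : ℕ) ∈ Set.Icc 1 n := ⟨le_rfl, hn⟩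
  have hk1mem : k + 1 ∈ Set.Icc 1 n := ⟨by omega, hkn'⟩
  have hkmem : k ∈ Set.Icc 1 n := ⟨hk.1, hk.2⟩
  have hπ1 : π 1 ∈ Set.Icc 1 n := hπ.mapsTo h1mem
  have hπk1 : π (k+1) ∈ Set.Icc 1 n := hπ.mapsTo hk1mem
  have hne1 : π 1 ≠ n := fun h => hk1 (hπ.injOn hkmem h1mem (by rw [hπk, h]))
  have hnek1 : π (k+1) ≠ n := fun h => (by omega : k + 1 ≠ k)
    (hπ.injOn hk1mem hkmem (by rw [hπk, h]))
  have hne : π 1 ≠ π (k+1) := fun h => (by omega : (1:ℕ) ≠ k + 1)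
    (hπ.injOn h1mem hk1mem h)
  rcases lt_or_gt_of_ne hne with h | h
  · exact h2 ⟨1, k, le_rfl, by omega, hkn', h, by
      rw [hπk]; exact lt_of_le_of_ne hπk1.2 hnek1⟩
  · exact h1 ⟨1, k, le_rfl, by omega, hkn', h, by
      rw [hπk]; exact lt_of_le_of_ne hπ1.2 hne1⟩
end

section
/- Let π be a permutation of {1,...,n} with n ≥ 2 that avoids the patterns 1-23 (no i < j with π(i) < π(j) < π(j+1)) and 2-13 (no i < j with π(j) < π(i) < π(j+1)). Then the value n occurs in one of the first two positions: π(1) = n or π(2) = n. -/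
theorem stmt_10 (n : ℕ) (π : ℕ → ℕ)
    (hπ : Set.BijOn π (Set.Icc 1 n) (Set.Icc 1 n))
    (hn : 2 ≤ n)
    (h1 : ¬ (∃ i j : ℕ, 1 ≤ i ∧ i < j ∧ j + 1 ≤ n ∧ π i < π j ∧ π j < π (j+1))) (h2 : ¬ (∃ i j : ℕ, 1 ≤ i ∧ i < j ∧ j + 1 ≤ n ∧ π j < π i ∧ π i < π (j+1))) :
    π 1 = n ∨ π 2 = n := by
  obtain ⟨k, hk, hπk⟩ := hπ.surjOn (Set.right_mem_Icc.mpr (by omega) : n ∈ Set.Icc 1 n)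
  simp only [Set.mem_Icc] at hk
  by_cases hk2 : k ≤ 2
  · rcases (by omega : k = 1 ∨ k = 2) with rfl | rfl
    · exact Or.inl hπk
    · exact Or.inr hπk
  · exfalso
    push_neg at hk2
    have hj : k - 1 ∈ Set.Icc 1 n := Set.mem_Icc.mpr ⟨by omega, by omega⟩
    have h1m : (1 : ℕ) ∈ Set.Icc 1 n := Set.mem_Icc.mpr ⟨le_refl 1, by omega⟩
    have hkm : k ∈ Set.Icc 1 n := Set.mem_Icc.mpr hk
    have hjn : π (k - 1) < n := by
      have hmem := hπ.mapsTo hj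
      simp only [Set.mem_Icc] at hmem
      rcases lt_or_eq_of_le hmem.2 with h | h
      · exact h
      · exact absurd (hπ.injOn hj hkm (h.trans hπk.symm)) (by omega)
    have h1n : π 1 < n := by
      have hmem := hπ.mapsTo h1m
      simp only [Set.mem_Icc] at hmem
      rcases lt_or_eq_of_le hmem.2 with h | h
      · exact h
      · exact absurd (hπ.injOn h1m hkm (h.trans hπk.symm)) (by omega)
    have hne : π 1 ≠ π (k - 1) := fun h => by
      have := hπ.injOn h1m hj h; omega
    have hkk : k - 1 + 1 = k := by omega
    rcases lt_or_gt_of_ne hne with h | h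
    · exact h1 ⟨1, k - 1, le_refl 1, by omega, by omega, h, by rw [hkk, hπk]; exact hjn⟩
    · exact h2 ⟨1, k - 1, le_refl 1, by omega, by omega, h, by rw [hkk, hπk]; exact h1n⟩
end

section
/- Let n ≥ 2. A permutation π of {1,...,n} avoids all four patterns 2-13 (no i < j with π(j) < π(i) < π(j+1)), 2-31 (no i < j with π(j+1) < π(i) < π(j)), 1-32 (no i < j with π(i) < π(j+1) < π(j)), and 3-12 (no i < j with π(j) < π(j+1) < π(i)) if and only if π is the identity permutation or the decreasing permutation π(i) = n+1−i. In particular, the number of such permutations of length n is exactly 2. -/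
def Pat (n : ℕ) (π : Equiv.Perm (Fin n)) : Prop :=
  (¬ (∃ (i j : Fin n) (h : (j : ℕ) + 1 < n), i < j ∧ π j < π i ∧ π i < π ⟨(j : ℕ) + 1, h⟩)) ∧
  (¬ (∃ (i j : Fin n) (h : (j : ℕ) + 1 < n), i < j ∧ π ⟨(j : ℕ) + 1, h⟩ < π i ∧ π i < π j)) ∧
  (¬ (∃ (i j : Fin n) (h : (j : ℕ) + 1 < n), i < j ∧ π i < π ⟨(j : ℕ) + 1, h⟩ ∧ π ⟨(j : ℕ) + 1, h⟩ < π j)) ∧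
  (¬ (∃ (i j : Fin n) (h : (j : ℕ) + 1 < n), i < j ∧ π j < π ⟨(j : ℕ) + 1, h⟩ ∧ π ⟨(j : ℕ) + 1, h⟩ < π i))

lemma key {n : ℕ} {π : Equiv.Perm (Fin n)} (H : Pat n π)
    {i j : Fin n} (hj : (j : ℕ) + 1 < n) (hij : i < j) :
    (π j < π ⟨(j : ℕ) + 1, hj⟩ ∧ π i < π j) ∨ (π ⟨(j : ℕ) + 1, hj⟩ < π j ∧ π j < π i) := by
  obtain ⟨h1, h2, h3, h4⟩ := H
  set k : Fin n := ⟨(j : ℕ) + 1, hj⟩ with hk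
  have hij' : π i ≠ π j := fun e => absurd (π.injective e) (ne_of_lt hij)
  have hjk : j ≠ k := by intro e; apply_fun (Fin.val) at e; simp [hk] at e
  have hik : i ≠ k := by
    intro e; apply_fun (Fin.val) at e
    have := Fin.lt_iff_val_lt_val.mp hij; simp [hk] at e; omega
  rcases lt_trichotomy (π j) (π k) with hA | hA | hA
  · left; refine ⟨hA, ?_⟩
    rcases lt_trichotomy (π i) (π j) with h | h | h
    · exact h
    · exact absurd h hij'
    · rcases lt_trichotomy (π i) (π k) with h' | h' | h'
      · exact absurd ⟨i, j, hj, hij, h, h'⟩ h1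
      · exact absurd (π.injective h') hik
      · exact absurd ⟨i, j, hj, hij, hA, h'⟩ h4
  · exact absurd (π.injective hA) hjk
  · right; refine ⟨hA, ?_⟩
    rcases lt_trichotomy (π j) (π i) with h | h | h
    · exact h
    · exact absurd h.symm hij'
    · rcases lt_trichotomy (π k) (π i) with h' | h' | h'
      · exact absurd ⟨i, j, hj, hij, h', h⟩ h2
      · exact absurd (π.injective h').symm hik
      · exact absurd ⟨i, j, hj, hij, h', hA⟩ h3

lemma perm_strictMono_eq_id {n : ℕ} {π : Equiv.Perm (Fin n)} (h : StrictMono π) :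
    ∀ i, π i = i := by
  have hm : ∀ m (hm : m < n), m ≤ (π ⟨m, hm⟩ : ℕ) := by
    intro m
    induction m with
    | zero => intro _; exact Nat.zero_le _
    | succ k ih =>
      intro hm
      have hk : k < n := Nat.lt_of_succ_lt hm
      have := h (show (⟨k, hk⟩ : Fin n) < ⟨k + 1, hm⟩ by simp [Fin.lt_iff_val_lt_val])
      have := Fin.lt_iff_val_lt_val.mp this
      have := ih hk
      omega
  have hinv : StrictMono (π.symm : Fin n → Fin n) := by
    intro a b hab
    rcases lt_trichotomy (π.symm a) (π.symm b) with h' | h' | h'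
    · exact h'
    · exact absurd (by rw [← π.apply_symm_apply a, ← π.apply_symm_apply b, h']) (ne_of_lt hab)
    · have := h h'
      rw [π.apply_symm_apply, π.apply_symm_apply] at this
      exact absurd this (not_lt_of_gt hab)
  have hm' : ∀ i : Fin n, (i : ℕ) ≤ (π.symm i : ℕ) := by
    intro i
    have hminv : ∀ m (hmlt : m < n), m ≤ (π.symm ⟨m, hmlt⟩ : ℕ) := by
      intro m
      induction m with
      | zero => intro _; exact Nat.zero_le _
      | succ k ih =>
        intro hmlt
        have hk : k < n := Nat.lt_of_succ_lt hmlt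
        have := hinv (show (⟨k, hk⟩ : Fin n) < ⟨k + 1, hmlt⟩ by simp [Fin.lt_iff_val_lt_val])
        have := Fin.lt_iff_val_lt_val.mp this
        have := ih hk
        omega
    have := hminv i.val i.isLt
    simpa using this
  intro i
  have h1 : (i : ℕ) ≤ (π i : ℕ) := by have := hm i.val i.isLt; simpa using this
  have h2 : (π i : ℕ) ≤ (i : ℕ) := by
    have := hm' (π i); rwa [π.symm_apply_apply] at this
  exact Fin.ext (le_antisymm h2 h1)

lemma asc_chain {n : ℕ} {π : Equiv.Perm (Fin n)} (H : Pat n π) (hn : 2 ≤ n)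
    (h0 : π ⟨0, by omega⟩ < π ⟨1, by omega⟩) :
    ∀ k (hk : k + 1 < n),
      π ⟨0, by omega⟩ < π ⟨k + 1, hk⟩ ∧ π ⟨k, by omega⟩ < π ⟨k + 1, hk⟩ := by
  intro k
  induction k with
  | zero => intro hk; exact ⟨h0, h0⟩
  | succ m ih =>
    intro hk
    have hm : m + 1 < n := Nat.lt_of_succ_lt hk
    obtain ⟨ih0, _⟩ := ih hm
    have hij : (⟨0, by omega⟩ : Fin n) < ⟨m + 1, hm⟩ := by
      simp [Fin.lt_iff_val_lt_val]
    have hjval : ((⟨m + 1, hm⟩ : Fin n) : ℕ) + 1 < n := hk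
    rcases key H hjval hij with ⟨ha, _⟩ | ⟨_, hb⟩
    · exact ⟨lt_trans ih0 ha, ha⟩
    · exact absurd hb (not_lt_of_gt ih0)

lemma desc_chain {n : ℕ} {π : Equiv.Perm (Fin n)} (H : Pat n π) (hn : 2 ≤ n)
    (h0 : π ⟨1, by omega⟩ < π ⟨0, by omega⟩) :
    ∀ k (hk : k + 1 < n),
      π ⟨k + 1, hk⟩ < π ⟨0, by omega⟩ ∧ π ⟨k + 1, hk⟩ < π ⟨k, by omega⟩ := by
  intro k
  induction k with
  | zero => intro hk; exact ⟨h0, h0⟩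
  | succ m ih =>
    intro hk
    have hm : m + 1 < n := Nat.lt_of_succ_lt hk
    obtain ⟨ih0, _⟩ := ih hm
    have hij : (⟨0, by omega⟩ : Fin n) < ⟨m + 1, hm⟩ := by
      simp [Fin.lt_iff_val_lt_val]
    have hjval : ((⟨m + 1, hm⟩ : Fin n) : ℕ) + 1 < n := hk
    rcases key H hjval hij with ⟨_, hb⟩ | ⟨ha, _⟩
    · exact absurd hb (not_lt_of_gt ih0)
    · exact ⟨lt_trans ha ih0, ha⟩

lemma chain_strictMono {n : ℕ} {f : Fin n → Fin n}
    (h : ∀ k (hk : k + 1 < n), f ⟨k, by omega⟩ < f ⟨k + 1, hk⟩) : StrictMono f := by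
  have main : ∀ b (hb : b < n) a (hab : a < b), f ⟨a, by omega⟩ < f ⟨b, hb⟩ := by
    intro b
    induction b with
    | zero => intro _ a hab; omega
    | succ m ih =>
      intro hb a hab
      rcases Nat.lt_or_ge a m with h' | h'
      · exact lt_trans (ih (Nat.lt_of_succ_lt hb) a h') (h m hb)
      · have : a = m := by omega
        subst this
        exact h a hb
  intro i j hij
  have := main j.val j.isLt i.val (Fin.lt_iff_val_lt_val.mp hij)
  simpa using this

theorem stmt_11 (n : ℕ) (hn : 2 ≤ n) :
    (∀ π : Equiv.Perm (Fin n),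
      ((¬ (∃ (i j : Fin n) (h : (j : ℕ) + 1 < n), i < j ∧ π j < π i ∧ π i < π ⟨(j : ℕ) + 1, h⟩)) ∧
      (¬ (∃ (i j : Fin n) (h : (j : ℕ) + 1 < n), i < j ∧ π ⟨(j : ℕ) + 1, h⟩ < π i ∧ π i < π j)) ∧
      (¬ (∃ (i j : Fin n) (h : (j : ℕ) + 1 < n), i < j ∧ π i < π ⟨(j : ℕ) + 1, h⟩ ∧ π ⟨(j : ℕ) + 1, h⟩ < π j)) ∧
      (¬ (∃ (i j : Fin n) (h : (j : ℕ) + 1 < n), i < j ∧ π j < π ⟨(j : ℕ) + 1, h⟩ ∧ π ⟨(j : ℕ) + 1, h⟩ < π i)))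
      ↔
      ((∀ i : Fin n, π i = i) ∨
      (∀ i : Fin n, (π i : ℕ) = n - 1 - (i : ℕ)))) ∧
    Set.ncard {π : Equiv.Perm (Fin n) |
      (¬ (∃ (i j : Fin n) (h : (j : ℕ) + 1 < n), i < j ∧ π j < π i ∧ π i < π ⟨(j : ℕ) + 1, h⟩)) ∧
      (¬ (∃ (i j : Fin n) (h : (j : ℕ) + 1 < n), i < j ∧ π ⟨(j : ℕ) + 1, h⟩ < π i ∧ π i < π j)) ∧
      (¬ (∃ (i j : Fin n) (h : (j : ℕ) + 1 < n), i < j ∧ π i < π ⟨(j : ℕ) + 1, h⟩ ∧ π ⟨(j : ℕ) + 1, h⟩ < π j)) ∧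
      (¬ (∃ (i j : Fin n) (h : (j : ℕ) + 1 < n), i < j ∧ π j < π ⟨(j : ℕ) + 1, h⟩ ∧ π ⟨(j : ℕ) + 1, h⟩ < π i))} = 2 := by
  have main : ∀ π : Equiv.Perm (Fin n), Pat n π ↔
      ((∀ i : Fin n, π i = i) ∨ (∀ i : Fin n, (π i : ℕ) = n - 1 - (i : ℕ))) := by
    intro π
    constructor
    · intro H
      have h01 : (⟨0, by omega⟩ : Fin n) ≠ ⟨1, by omega⟩ := by
        intro e; apply_fun Fin.val at e; simp at e
      rcases lt_trichotomy (π ⟨0, by omega⟩) (π ⟨1, by omega⟩) with h0 | h0 | h0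
      · left
        have hsm : StrictMono (π : Fin n → Fin n) := by
          apply chain_strictMono
          intro k hk
          exact (asc_chain H hn h0 k hk).2
        exact perm_strictMono_eq_id hsm
      · exact absurd (π.injective h0) h01
      · right
        have hsm : StrictMono ((π.trans Fin.revPerm) : Fin n → Fin n) := by
          apply chain_strictMono
          intro k hk
          have := (desc_chain H hn h0 k hk).2
          simp only [Equiv.trans_apply, Fin.revPerm_apply]
          exact Fin.rev_lt_rev.mpr this
        have := perm_strictMono_eq_id hsm
        intro i
        have hi := this i
        simp only [Equiv.trans_apply, Fin.revPerm_apply] at hi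
        have : π i = Fin.rev i := by
          have := congrArg Fin.rev hi
          rwa [Fin.rev_rev] at this
        rw [this, Fin.val_rev]
        omega
    · intro h
      rcases h with h | h
      · refine ⟨?_, ?_, ?_, ?_⟩ <;>
        · rintro ⟨i, j, hj, hij, ha, hb⟩
          simp only [h] at ha hb
          simp only [Fin.lt_def, Fin.val_mk] at hij ha hb
          omega
      · refine ⟨?_, ?_, ?_, ?_⟩ <;>
        · rintro ⟨i, j, hj, hij, ha, hb⟩
          have e1 := h i
          have e2 := h j
          have e3 := h ⟨(j : ℕ) + 1, hj⟩
          simp only [Fin.lt_def, Fin.val_mk] at hij ha hb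
          simp only [Fin.val_mk] at e3
          rw [e1, e2, e3] at *
          have hi := i.isLt
          have hjlt := j.isLt
          omega
  constructor
  · intro π
    exact main π
  · have hset : {π : Equiv.Perm (Fin n) | Pat n π} = {1, Fin.revPerm} := by
      ext π
      simp only [Set.mem_setOf_eq, Set.mem_insert_iff, Set.mem_singleton_iff]
      rw [main π]
      constructor
      · rintro (h | h)
        · left; ext i; simp [h i]
        · right; ext i
          simp only [Fin.revPerm_apply, Fin.val_rev]
          have := h i
          have := i.isLt
          omega
      · rintro (h | h)
        · left; intro i; rw [h]; rfl
        · right; intro i; rw [h]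
          simp only [Fin.revPerm_apply, Fin.val_rev]
          have := i.isLt
          omega
    have : {π : Equiv.Perm (Fin n) |
      (¬ (∃ (i j : Fin n) (h : (j : ℕ) + 1 < n), i < j ∧ π j < π i ∧ π i < π ⟨(j : ℕ) + 1, h⟩)) ∧
      (¬ (∃ (i j : Fin n) (h : (j : ℕ) + 1 < n), i < j ∧ π ⟨(j : ℕ) + 1, h⟩ < π i ∧ π i < π j)) ∧
      (¬ (∃ (i j : Fin n) (h : (j : ℕ) + 1 < n), i < j ∧ π i < π ⟨(j : ℕ) + 1, h⟩ ∧ π ⟨(j : ℕ) + 1, h⟩ < π j)) ∧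
      (¬ (∃ (i j : Fin n) (h : (j : ℕ) + 1 < n), i < j ∧ π j < π ⟨(j : ℕ) + 1, h⟩ ∧ π ⟨(j : ℕ) + 1, h⟩ < π i))}
        = {π : Equiv.Perm (Fin n) | Pat n π} := rfl
    rw [this, hset]
    apply Set.ncard_pair
    intro e
    have := congrArg (fun σ : Equiv.Perm (Fin n) => (σ ⟨0, by omega⟩ : ℕ)) e
    simp only [Equiv.Perm.coe_one, id_eq, Fin.revPerm_apply, Fin.val_rev] at this
    omega
end

section
/- Let n ≥ 2. A permutation π of {1,...,n} avoids the four patterns 1-23, 2-31, 1-32, and 3-12 (with the adjacency conventions of generalized patterns) if and only if π is the decreasing permutation n (n−1) ... 2 1 or the permutation (n−1)(n−2)...2 1 n. In particular, there are exactly 2 such permutations of each length n ≥ 2. -/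
private def rFun (n : ℕ) (i : Fin n) : Fin n :=
  ⟨n - 1 - (i : ℕ), by have := i.isLt; omega⟩

private def eFun (n : ℕ) (i : Fin n) : Fin n :=
  if (i : ℕ) = n - 1 then ⟨n - 1, by have := i.isLt; omega⟩
  else ⟨n - 2 - (i : ℕ), by have := i.isLt; omega⟩

private lemma rFun_val (n : ℕ) (i : Fin n) : (rFun n i : ℕ) = n - 1 - (i : ℕ) := rfl

private lemma eFun_val (n : ℕ) (i : Fin n) :
    (eFun n i : ℕ) = if (i : ℕ) = n - 1 then n - 1 else n - 2 - (i : ℕ) := by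
  unfold eFun; split <;> rfl

private lemma rFun_invol (n : ℕ) (i : Fin n) : rFun n (rFun n i) = i := by
  apply Fin.ext
  rw [rFun_val, rFun_val]
  have := i.isLt
  omega

private lemma eFun_invol (n : ℕ) (i : Fin n) : eFun n (eFun n i) = i := by
  apply Fin.ext
  rw [eFun_val, eFun_val]
  have := i.isLt
  split_ifs <;> omega

private def rPerm (n : ℕ) : Equiv.Perm (Fin n) :=
  ⟨rFun n, rFun n, rFun_invol n, rFun_invol n⟩

private def ePerm (n : ℕ) : Equiv.Perm (Fin n) :=
  ⟨eFun n, eFun n, eFun_invol n, eFun_invol n⟩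

private lemma rPerm_apply (n : ℕ) (i : Fin n) : rPerm n i = rFun n i := rfl
private lemma ePerm_apply (n : ℕ) (i : Fin n) : ePerm n i = eFun n i := rfl

private lemma le_apply_of_strictMono {n : ℕ} (f : Fin n → Fin n) (hf : StrictMono f) :
    ∀ i : Fin n, (i : ℕ) ≤ (f i : ℕ) := by
  suffices H : ∀ k (hk : k < n), k ≤ (f ⟨k, hk⟩ : ℕ) by
    intro i; exact H i i.isLt
  intro k
  induction k with
  | zero => intro hk; exact Nat.zero_le _
  | succ m ih =>
    intro hk
    have h1 := ih (by omega)
    have h2 : f ⟨m, by omega⟩ < f ⟨m + 1, hk⟩ := hf (by simp [Fin.lt_def])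
    have h3 := Fin.lt_def.mp h2
    omega

private lemma strictMono_perm_eq {n : ℕ} (f : Equiv.Perm (Fin n)) (hf : StrictMono ⇑f) :
    ∀ i, f i = i := by
  have hsymm : StrictMono ⇑f.symm := by
    intro a b hab
    rw [← hf.lt_iff_lt, Equiv.apply_symm_apply, Equiv.apply_symm_apply]
    exact hab
  intro i
  have h1 := le_apply_of_strictMono _ hf i
  have h2 := le_apply_of_strictMono _ hsymm (f i)
  rw [Equiv.symm_apply_apply] at h2
  exact Fin.ext (by omega)

private lemma decr_chain {n : ℕ} (f : Fin n → Fin n) (M : ℕ)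
    (h : ∀ k, k + 1 < M → ∀ (hk : k + 1 < n), f ⟨k + 1, hk⟩ < f ⟨k, by omega⟩) :
    ∀ a b (ha : a < n) (hb : b < n), a < b → b < M → f ⟨b, hb⟩ < f ⟨a, ha⟩ := by
  intro a b
  induction b with
  | zero => intro _ _ hab _; omega
  | succ c ih =>
    intro ha hb hab hbM
    have hc : f ⟨c + 1, hb⟩ < f ⟨c, by omega⟩ := h c hbM hb
    rcases Nat.lt_or_ge a c with h' | h'
    · exact lt_trans hc (ih ha (by omega) h' (by omega))
    · have : a = c := by omega
      subst this
      exact hc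

theorem stmt_12 (n : ℕ) (hn : 2 ≤ n) :
    (∀ π : Equiv.Perm (Fin n),
      ((¬ (∃ (i j : Fin n) (h : (j : ℕ) + 1 < n), i < j ∧ π i < π j ∧ π j < π ⟨(j : ℕ) + 1, h⟩)) ∧
      (¬ (∃ (i j : Fin n) (h : (j : ℕ) + 1 < n), i < j ∧ π ⟨(j : ℕ) + 1, h⟩ < π i ∧ π i < π j)) ∧
      (¬ (∃ (i j : Fin n) (h : (j : ℕ) + 1 < n), i < j ∧ π i < π ⟨(j : ℕ) + 1, h⟩ ∧ π ⟨(j : ℕ) + 1, h⟩ < π j)) ∧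
      (¬ (∃ (i j : Fin n) (h : (j : ℕ) + 1 < n), i < j ∧ π j < π ⟨(j : ℕ) + 1, h⟩ ∧ π ⟨(j : ℕ) + 1, h⟩ < π i)))
      ↔
      ((∀ i : Fin n, (π i : ℕ) = n - 1 - (i : ℕ)) ∨
      (∀ i : Fin n, ((i : ℕ) < n - 1 → (π i : ℕ) = n - 2 - (i : ℕ)) ∧ ((i : ℕ) = n - 1 → (π i : ℕ) = n - 1)))) ∧
    Set.ncard {π : Equiv.Perm (Fin n) |
      (¬ (∃ (i j : Fin n) (h : (j : ℕ) + 1 < n), i < j ∧ π i < π j ∧ π j < π ⟨(j : ℕ) + 1, h⟩)) ∧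
      (¬ (∃ (i j : Fin n) (h : (j : ℕ) + 1 < n), i < j ∧ π ⟨(j : ℕ) + 1, h⟩ < π i ∧ π i < π j)) ∧
      (¬ (∃ (i j : Fin n) (h : (j : ℕ) + 1 < n), i < j ∧ π i < π ⟨(j : ℕ) + 1, h⟩ ∧ π ⟨(j : ℕ) + 1, h⟩ < π j)) ∧
      (¬ (∃ (i j : Fin n) (h : (j : ℕ) + 1 < n), i < j ∧ π j < π ⟨(j : ℕ) + 1, h⟩ ∧ π ⟨(j : ℕ) + 1, h⟩ < π i))} = 2 := by
  have main : ∀ π : Equiv.Perm (Fin n),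
      ((¬ (∃ (i j : Fin n) (h : (j : ℕ) + 1 < n), i < j ∧ π i < π j ∧ π j < π ⟨(j : ℕ) + 1, h⟩)) ∧
      (¬ (∃ (i j : Fin n) (h : (j : ℕ) + 1 < n), i < j ∧ π ⟨(j : ℕ) + 1, h⟩ < π i ∧ π i < π j)) ∧
      (¬ (∃ (i j : Fin n) (h : (j : ℕ) + 1 < n), i < j ∧ π i < π ⟨(j : ℕ) + 1, h⟩ ∧ π ⟨(j : ℕ) + 1, h⟩ < π j)) ∧
      (¬ (∃ (i j : Fin n) (h : (j : ℕ) + 1 < n), i < j ∧ π j < π ⟨(j : ℕ) + 1, h⟩ ∧ π ⟨(j : ℕ) + 1, h⟩ < π i)))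
      ↔
      ((∀ i : Fin n, (π i : ℕ) = n - 1 - (i : ℕ)) ∨
      (∀ i : Fin n, ((i : ℕ) < n - 1 → (π i : ℕ) = n - 2 - (i : ℕ)) ∧ ((i : ℕ) = n - 1 → (π i : ℕ) = n - 1))) := by
    intro π
    constructor
    · rintro ⟨h1, h2, h3, h4⟩
      -- key structural fact
      have key : ∀ (i j : Fin n) (hj : (j : ℕ) + 1 < n), i < j →
          π j < π i ∧ (π j < π ⟨(j : ℕ) + 1, hj⟩ → π i < π ⟨(j : ℕ) + 1, hj⟩) := by
        intro i j hj hij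
        have hv := Fin.lt_def.mp hij
        have hij' : i ≠ j := ne_of_lt hij
        have hjk : j ≠ (⟨(j : ℕ) + 1, hj⟩ : Fin n) :=
          Fin.ne_of_val_ne (show (j : ℕ) ≠ (j : ℕ) + 1 by omega)
        have hik : i ≠ (⟨(j : ℕ) + 1, hj⟩ : Fin n) :=
          Fin.ne_of_val_ne (show (i : ℕ) ≠ (j : ℕ) + 1 by omega)
        have nab : π i ≠ π j := fun h => hij' (π.injective h)
        have nbc : π j ≠ π ⟨(j : ℕ) + 1, hj⟩ := fun h => hjk (π.injective h)
        have nac : π i ≠ π ⟨(j : ℕ) + 1, hj⟩ := fun h => hik (π.injective h)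
        rcases lt_trichotomy (π j) (π i) with hba | hba | hba
        · refine ⟨hba, fun hasc => ?_⟩
          by_contra hle
          push_neg at hle
          have hlt : π ⟨(j : ℕ) + 1, hj⟩ < π i := lt_of_le_of_ne hle nac.symm
          exact h4 ⟨i, j, hj, hij, hasc, hlt⟩
        · exact absurd hba.symm nab
        · exfalso
          rcases lt_trichotomy (π i) (π ⟨(j : ℕ) + 1, hj⟩) with h1' | h1' | h1'
          · rcases lt_trichotomy (π j) (π ⟨(j : ℕ) + 1, hj⟩) with h2' | h2' | h2'
            · exact h1 ⟨i, j, hj, hij, hba, h2'⟩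
            · exact nbc h2'
            · exact h3 ⟨i, j, hj, hij, h1', h2'⟩
          · exact nac h1'
          · exact h2 ⟨i, j, hj, hij, h1', hba⟩
      have desc : ∀ (k : ℕ) (hk2 : k + 2 < n), π ⟨k + 1, by omega⟩ < π ⟨k, by omega⟩ := by
        intro k hk2
        exact (key ⟨k, by omega⟩ ⟨k + 1, by omega⟩ hk2 (Fin.mk_lt_mk.mpr (by omega))).1
      have hL : n - 2 + 1 < n := by omega
      have hP : n - 2 < n := by omega
      by_cases hcase : π ⟨n - 2 + 1, hL⟩ < π ⟨n - 2, hP⟩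
      · -- fully decreasing
        have consec : ∀ (k : ℕ), k + 1 < n → ∀ (hk : k + 1 < n),
            π ⟨k + 1, hk⟩ < π ⟨k, by omega⟩ := by
          intro k _ hk
          rcases Nat.lt_or_ge (k + 2) n with h' | h'
          · exact desc k h'
          · have e1 : k = n - 2 := by omega
            subst e1
            exact hcase
        have anti := decr_chain (⇑π) n consec
        have gmono : StrictMono ⇑((rPerm n).trans π) := by
          intro a b hab
          have hv := Fin.lt_def.mp hab
          have ha := a.isLt; have hb := b.isLt
          show π (rFun n a) < π (rFun n b)
          exact anti (n - 1 - (b : ℕ)) (n - 1 - (a : ℕ)) (by omega) (by omega) (by omega) (by omega)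
        have gid := strictMono_perm_eq _ gmono
        left
        intro i
        have hgi := gid (rFun n i)
        rw [Equiv.trans_apply, rPerm_apply, rFun_invol] at hgi
        rw [hgi]
        exact rFun_val n i
      · -- ascent at the end
        have hasc : π ⟨n - 2, hP⟩ < π ⟨n - 2 + 1, hL⟩ := by
          have hne' : π ⟨n - 2, hP⟩ ≠ π ⟨n - 2 + 1, hL⟩ := by
            intro h
            have h' := π.injective h
            rw [Fin.mk.injEq] at h'
            omega
          exact lt_of_le_of_ne (not_lt.mp hcase) hne'
        have hprec : ∀ (i : Fin n), (i : ℕ) < n - 2 → π i < π ⟨n - 2 + 1, hL⟩ := by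
          intro i hi
          exact (key i ⟨n - 2, hP⟩ hL (Fin.lt_def.mpr hi)).2 hasc
        have hmaxval : (π ⟨n - 2 + 1, hL⟩ : ℕ) = n - 1 := by
          obtain ⟨x, hx⟩ := π.surjective ⟨n - 1, by omega⟩
          have hxle : (π x : ℕ) ≤ (π ⟨n - 2 + 1, hL⟩ : ℕ) := by
            rcases Nat.lt_or_ge (x : ℕ) (n - 2) with h' | h'
            · exact le_of_lt (Fin.lt_def.mp (hprec x h'))
            · rcases Nat.lt_or_ge (x : ℕ) (n - 1) with h'' | h''
              · have hx2 : x = ⟨n - 2, hP⟩ := Fin.ext (show (x : ℕ) = n - 2 by omega)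
                rw [hx2]
                exact le_of_lt (Fin.lt_def.mp hasc)
              · have hx2 : x = ⟨n - 2 + 1, hL⟩ := Fin.ext (show (x : ℕ) = n - 2 + 1 by have := x.isLt; omega)
                rw [hx2]
          rw [hx] at hxle
          have hxle' : n - 1 ≤ (π ⟨n - 2 + 1, hL⟩ : ℕ) := hxle
          have hlt2 := (π ⟨n - 2 + 1, hL⟩).isLt
          omega
        have hprefix := decr_chain (⇑π) (n - 1) (fun k hk1 hk => desc k (by omega))
        have hvne : ∀ (a : Fin n), (a : ℕ) < n - 1 → (π a : ℕ) ≠ n - 1 := by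
          intro a ha hval
          have he : π a = π ⟨n - 2 + 1, hL⟩ := Fin.ext (by rw [hmaxval]; exact hval)
          have he2 := π.injective he
          have he3 := congrArg Fin.val he2
          simp only [] at he3
          omega
        have gmono : StrictMono ⇑(π.trans (ePerm n)) := by
          intro a b hab
          have hvab := Fin.lt_def.mp hab
          have ha := a.isLt; have hb := b.isLt
          show ePerm n (π a) < ePerm n (π b)
          rw [ePerm_apply, ePerm_apply, Fin.lt_def, eFun_val, eFun_val]
          rcases Nat.lt_or_ge (b : ℕ) (n - 1) with hb' | hb'
          · have hpa := hvne a (by omega)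
            have hpb := hvne b hb'
            have hdec : π b < π a := hprefix (a : ℕ) (b : ℕ) a.isLt b.isLt hvab hb'
            have hdv := Fin.lt_def.mp hdec
            have h2a := (π a).isLt; have h2b := (π b).isLt
            rw [if_neg hpa, if_neg hpb]
            omega
          · have hbL : b = ⟨n - 2 + 1, hL⟩ := Fin.ext (show (b : ℕ) = n - 2 + 1 by omega)
            have hpa := hvne a (by omega)
            rw [hbL, hmaxval, if_pos rfl, if_neg hpa]
            have h2a := (π a).isLt
            omega
        have gid := strictMono_perm_eq _ gmono
        right
        intro i
        have hgi : eFun n (π i) = i := by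
          have := gid i
          rwa [Equiv.trans_apply, ePerm_apply] at this
        have hpi : π i = eFun n i := by
          have h' := congrArg (eFun n) hgi
          rwa [eFun_invol] at h'
        constructor
        · intro hi
          rw [hpi, eFun_val, if_neg (by omega)]
        · intro hi
          rw [hpi, eFun_val, if_pos hi]
    · rintro (hf | hs)
      · refine ⟨?_, ?_, ?_, ?_⟩ <;>
        · rintro ⟨i, j, hj, hij, hA, hB⟩
          have e1 : (π i : ℕ) = n - 1 - (i : ℕ) := hf i
          have e2 : (π j : ℕ) = n - 1 - (j : ℕ) := hf j
          have e3 : (π ⟨(j : ℕ) + 1, hj⟩ : ℕ) = n - 1 - ((j : ℕ) + 1) := hf _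
          have h5 := Fin.lt_def.mp hij
          have h6 := Fin.lt_def.mp hA
          have h7 := Fin.lt_def.mp hB
          have h8 := j.isLt
          omega
      · refine ⟨?_, ?_, ?_, ?_⟩ <;>
        · rintro ⟨i, j, hj, hij, hA, hB⟩
          have h5 := Fin.lt_def.mp hij
          have h6 := Fin.lt_def.mp hA
          have h7 := Fin.lt_def.mp hB
          have h8 := j.isLt
          have h9 := i.isLt
          have e1 : (π i : ℕ) = n - 2 - (i : ℕ) := (hs i).1 (by omega)
          have e2 : (π j : ℕ) = n - 2 - (j : ℕ) := (hs j).1 (by omega)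
          rcases Nat.lt_or_ge ((j : ℕ) + 1) (n - 1) with hc | hc
          · have e3 : (π ⟨(j : ℕ) + 1, hj⟩ : ℕ) = n - 2 - ((j : ℕ) + 1) :=
              (hs _).1 hc
            omega
          · have e3 : (π ⟨(j : ℕ) + 1, hj⟩ : ℕ) = n - 1 :=
              (hs _).2 (show (j : ℕ) + 1 = n - 1 by omega)
            omega
  refine ⟨main, ?_⟩
  have hset : {π : Equiv.Perm (Fin n) |
      (¬ (∃ (i j : Fin n) (h : (j : ℕ) + 1 < n), i < j ∧ π i < π j ∧ π j < π ⟨(j : ℕ) + 1, h⟩)) ∧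
      (¬ (∃ (i j : Fin n) (h : (j : ℕ) + 1 < n), i < j ∧ π ⟨(j : ℕ) + 1, h⟩ < π i ∧ π i < π j)) ∧
      (¬ (∃ (i j : Fin n) (h : (j : ℕ) + 1 < n), i < j ∧ π i < π ⟨(j : ℕ) + 1, h⟩ ∧ π ⟨(j : ℕ) + 1, h⟩ < π j)) ∧
      (¬ (∃ (i j : Fin n) (h : (j : ℕ) + 1 < n), i < j ∧ π j < π ⟨(j : ℕ) + 1, h⟩ ∧ π ⟨(j : ℕ) + 1, h⟩ < π i))}
      = {rPerm n, ePerm n} := by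
    ext π
    rw [Set.mem_setOf_eq, main π]
    simp only [Set.mem_insert_iff, Set.mem_singleton_iff]
    constructor
    · rintro (hf | hs)
      · left
        exact Equiv.ext fun i => Fin.ext ((hf i).trans (rFun_val n i).symm)
      · right
        refine Equiv.ext fun i => Fin.ext ?_
        rw [ePerm_apply, eFun_val]
        split_ifs with hc
        · exact (hs i).2 hc
        · exact (hs i).1 (by have := i.isLt; omega)
    · rintro (rfl | rfl)
      · left
        intro i
        exact rFun_val n i
      · right
        intro i
        constructor
        · intro hi
          rw [ePerm_apply, eFun_val, if_neg (by omega)]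
        · intro hi
          rw [ePerm_apply, eFun_val, if_pos hi]
  rw [hset]
  have hne : rPerm n ≠ ePerm n := by
    intro h
    have h0 : rPerm n ⟨0, by omega⟩ = ePerm n ⟨0, by omega⟩ := by rw [h]
    have hv := congrArg Fin.val h0
    rw [rPerm_apply, ePerm_apply, rFun_val, eFun_val] at hv
    have hv2 : n - 1 - 0 = if (0 : ℕ) = n - 1 then n - 1 else n - 2 - 0 := hv
    rw [if_neg (by omega)] at hv2
    omega
  exact Set.ncard_pair hne
end

section
/- Let n ≥ 2. A permutation π of {1,...,n} avoids the four patterns 1-23, 2-13, 1-32, and 3-12 if and only if π equals n (n−1) ... 2 1 or (n−1) n (n−2) (n−3) ... 2 1. In particular, there are exactly 2 such permutations of each length n ≥ 2. -/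
namespace Stmt13Aux

variable {n : ℕ}

def Avoids (π : Equiv.Perm (Fin n)) : Prop :=
  (¬ (∃ (i j : Fin n) (h : (j : ℕ) + 1 < n), i < j ∧ π i < π j ∧ π j < π ⟨(j : ℕ) + 1, h⟩)) ∧
  (¬ (∃ (i j : Fin n) (h : (j : ℕ) + 1 < n), i < j ∧ π j < π i ∧ π i < π ⟨(j : ℕ) + 1, h⟩)) ∧
  (¬ (∃ (i j : Fin n) (h : (j : ℕ) + 1 < n), i < j ∧ π i < π ⟨(j : ℕ) + 1, h⟩ ∧ π ⟨(j : ℕ) + 1, h⟩ < π j)) ∧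
  (¬ (∃ (i j : Fin n) (h : (j : ℕ) + 1 < n), i < j ∧ π j < π ⟨(j : ℕ) + 1, h⟩ ∧ π ⟨(j : ℕ) + 1, h⟩ < π i))

def Q (π : Equiv.Perm (Fin n)) : Prop :=
  ∀ p k : Fin n, 2 ≤ (p : ℕ) → k < p → π p < π k

lemma avoids_iff_q (π : Equiv.Perm (Fin n)) : Avoids π ↔ Q π := by
  constructor
  · rintro ⟨h1, h2, h3, h4⟩
    have step : ∀ (i j : Fin n) (h : (j : ℕ) + 1 < n), i < j →
        π ⟨(j : ℕ) + 1, h⟩ < π i ∧ π ⟨(j : ℕ) + 1, h⟩ < π j := by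
      intro i j h hij
      have hij' : (i : ℕ) < (j : ℕ) := hij
      have d1 : ((π i : ℕ)) ≠ (π j : ℕ) := by
        intro e; exact absurd (congrArg Fin.val (π.injective (Fin.ext e))) (by omega)
      have d2 : ((π i : ℕ)) ≠ (π ⟨(j : ℕ) + 1, h⟩ : ℕ) := by
        intro e; exact absurd (congrArg Fin.val (π.injective (Fin.ext e))) (by simp; omega)
      have d3 : ((π j : ℕ)) ≠ (π ⟨(j : ℕ) + 1, h⟩ : ℕ) := by
        intro e; exact absurd (congrArg Fin.val (π.injective (Fin.ext e))) (by simp)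
      have H1 : ¬ ((π i : ℕ) < (π j : ℕ) ∧ (π j : ℕ) < (π ⟨(j : ℕ) + 1, h⟩ : ℕ)) := by
        intro hc; exact h1 ⟨i, j, h, hij, Fin.lt_def.mpr hc.1, Fin.lt_def.mpr hc.2⟩
      have H2 : ¬ ((π j : ℕ) < (π i : ℕ) ∧ (π i : ℕ) < (π ⟨(j : ℕ) + 1, h⟩ : ℕ)) := by
        intro hc; exact h2 ⟨i, j, h, hij, Fin.lt_def.mpr hc.1, Fin.lt_def.mpr hc.2⟩
      have H3 : ¬ ((π i : ℕ) < (π ⟨(j : ℕ) + 1, h⟩ : ℕ) ∧ (π ⟨(j : ℕ) + 1, h⟩ : ℕ) < (π j : ℕ)) := by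
        intro hc; exact h3 ⟨i, j, h, hij, Fin.lt_def.mpr hc.1, Fin.lt_def.mpr hc.2⟩
      have H4 : ¬ ((π j : ℕ) < (π ⟨(j : ℕ) + 1, h⟩ : ℕ) ∧ (π ⟨(j : ℕ) + 1, h⟩ : ℕ) < (π i : ℕ)) := by
        intro hc; exact h4 ⟨i, j, h, hij, Fin.lt_def.mpr hc.1, Fin.lt_def.mpr hc.2⟩
      exact ⟨Fin.lt_def.mpr (by omega), Fin.lt_def.mpr (by omega)⟩
    intro p k hp hk
    have hk' : (k : ℕ) < (p : ℕ) := hk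
    have hpn : (p : ℕ) < n := p.isLt
    set j : Fin n := ⟨(p : ℕ) - 1, by omega⟩ with hj
    have h : (j : ℕ) + 1 < n := by simp [hj]; omega
    have hpe : (⟨(j : ℕ) + 1, h⟩ : Fin n) = p := Fin.ext (by simp [hj]; omega)
    rcases Nat.lt_or_ge (k : ℕ) ((p : ℕ) - 1) with hc | hc
    · have := (step k j h (Fin.lt_def.mpr (by simp [hj]; omega))).1
      rwa [hpe] at this
    · have hkj : k = j := Fin.ext (by simp [hj]; omega)
      have := (step ⟨0, by omega⟩ j h (Fin.lt_def.mpr (by simp [hj]; omega))).2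
      rw [hpe, ← hkj] at this
      exact this
  · intro hQ
    refine ⟨?_, ?_, ?_, ?_⟩ <;> rintro ⟨i, j, h, hij, x, y⟩ <;>
    · have hij' : (i : ℕ) < (j : ℕ) := hij
      have hc1 : π ⟨(j : ℕ) + 1, h⟩ < π i :=
        hQ _ i (by simp; omega) (Fin.lt_def.mpr (by simp; omega))
      have hc2 : π ⟨(j : ℕ) + 1, h⟩ < π j :=
        hQ _ j (by simp; omega) (Fin.lt_def.mpr (by simp))
      rw [Fin.lt_def] at x y hc1 hc2
      omega

lemma q_val (π : Equiv.Perm (Fin n)) (hQ : Q π) (p : Fin n) (hp : 2 ≤ (p : ℕ)) :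
    ((π p : ℕ)) = n - 1 - (p : ℕ) := by
  have h1 : (Finset.Ioi p).card ≤ (Finset.Iio (π p)).card := by
    apply Finset.card_le_card_of_injOn π
    · intro q hq
      rw [Finset.mem_coe, Finset.mem_Ioi] at hq
      rw [Finset.mem_coe, Finset.mem_Iio]
      exact hQ q p (by have : (p : ℕ) < (q : ℕ) := hq; omega) hq
    · exact π.injective.injOn
  have h2 : (Finset.Iio p).card ≤ (Finset.Ioi (π p)).card := by
    apply Finset.card_le_card_of_injOn π
    · intro k hk
      rw [Finset.mem_coe, Finset.mem_Iio] at hk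
      rw [Finset.mem_coe, Finset.mem_Ioi]
      exact hQ p k hp hk
    · exact π.injective.injOn
  rw [Fin.card_Ioi, Fin.card_Iio] at h1
  rw [Fin.card_Iio, Fin.card_Ioi] at h2
  have := p.isLt
  have := (π p).isLt
  omega

lemma q_big (π : Equiv.Perm (Fin n)) (hQ : Q π) (hn : 2 ≤ n) (k : Fin n) (hk : (k : ℕ) ≤ 1) :
    n - 2 ≤ (π k : ℕ) := by
  have h1 : (Finset.Ioi (⟨1, by omega⟩ : Fin n)).card ≤ (Finset.Iio (π k)).card := by
    apply Finset.card_le_card_of_injOn π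
    · intro q hq
      rw [Finset.mem_coe, Finset.mem_Ioi] at hq
      have hq' : 1 < (q : ℕ) := hq
      rw [Finset.mem_coe, Finset.mem_Iio]
      exact hQ q k (by omega) (Fin.lt_def.mpr (by omega))
    · exact π.injective.injOn
  rw [Fin.card_Ioi, Fin.card_Iio] at h1
  have h1' : n - 1 - 1 ≤ (π k : ℕ) := h1
  omega

lemma q_iff (hn : 2 ≤ n) (π : Equiv.Perm (Fin n)) :
    Q π ↔ ((∀ i : Fin n, (π i : ℕ) = n - 1 - (i : ℕ)) ∨
      (∀ i : Fin n, ((i : ℕ) = 0 → (π i : ℕ) = n - 2) ∧ ((i : ℕ) = 1 → (π i : ℕ) = n - 1) ∧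
        (2 ≤ (i : ℕ) → (π i : ℕ) = n - 1 - (i : ℕ)))) := by
  constructor
  · intro hQ
    set z : Fin n := ⟨0, by omega⟩ with hz
    set o : Fin n := ⟨1, by omega⟩ with ho
    have hbz : n - 2 ≤ (π z : ℕ) := q_big π hQ hn z (by simp [hz])
    have hbo : n - 2 ≤ (π o : ℕ) := q_big π hQ hn o (by simp [ho])
    have hne : ((π z : ℕ)) ≠ (π o : ℕ) := by
      intro e
      have := congrArg Fin.val (π.injective (Fin.ext e))
      simp [hz, ho] at this
    have h1 := (π z).isLt
    have h2 := (π o).isLt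
    have hcase : ((π z : ℕ) = n - 1 ∧ (π o : ℕ) = n - 2) ∨
        ((π z : ℕ) = n - 2 ∧ (π o : ℕ) = n - 1) := by omega
    rcases hcase with ⟨e1, e2⟩ | ⟨e1, e2⟩
    · left
      intro i
      rcases Nat.lt_or_ge (i : ℕ) 2 with hi | hi
      · interval_cases h : (i : ℕ)
        · have : i = z := Fin.ext (by simp [hz, h])
          rw [this, e1]; omega
        · have : i = o := Fin.ext (by simp [ho, h])
          rw [this, e2]; omega
      · exact q_val π hQ i hi
    · right
      intro i
      refine ⟨fun h => ?_, fun h => ?_, fun h => q_val π hQ i h⟩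
      · have : i = z := Fin.ext (by simp [hz, h])
        rw [this, e1]
      · have : i = o := Fin.ext (by simp [ho, h])
        rw [this, e2]
  · rintro (hL | hR) p k hp hk
    · have hk' : (k : ℕ) < (p : ℕ) := hk
      have := p.isLt
      rw [Fin.lt_def, hL p, hL k]
      omega
    · have hk' : (k : ℕ) < (p : ℕ) := hk
      have hpn := p.isLt
      obtain ⟨a0, a1, a2⟩ := hR k
      have hp' := (hR p).2.2 hp
      rw [Fin.lt_def, hp']
      rcases Nat.lt_or_ge (k : ℕ) 2 with hkc | hkc
      · interval_cases hkk : (k : ℕ)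
        · rw [a0 rfl]; omega
        · rw [a1 rfl]; omega
      · rw [a2 hkc]; omega

end Stmt13Aux

open Stmt13Aux in
theorem stmt_13 (n : ℕ) (hn : 2 ≤ n) :
    (∀ π : Equiv.Perm (Fin n),
      ((¬ (∃ (i j : Fin n) (h : (j : ℕ) + 1 < n), i < j ∧ π i < π j ∧ π j < π ⟨(j : ℕ) + 1, h⟩)) ∧
      (¬ (∃ (i j : Fin n) (h : (j : ℕ) + 1 < n), i < j ∧ π j < π i ∧ π i < π ⟨(j : ℕ) + 1, h⟩)) ∧
      (¬ (∃ (i j : Fin n) (h : (j : ℕ) + 1 < n), i < j ∧ π i < π ⟨(j : ℕ) + 1, h⟩ ∧ π ⟨(j : ℕ) + 1, h⟩ < π j)) ∧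
      (¬ (∃ (i j : Fin n) (h : (j : ℕ) + 1 < n), i < j ∧ π j < π ⟨(j : ℕ) + 1, h⟩ ∧ π ⟨(j : ℕ) + 1, h⟩ < π i)))
      ↔
      ((∀ i : Fin n, (π i : ℕ) = n - 1 - (i : ℕ)) ∨
      (∀ i : Fin n, ((i : ℕ) = 0 → (π i : ℕ) = n - 2) ∧ ((i : ℕ) = 1 → (π i : ℕ) = n - 1) ∧ (2 ≤ (i : ℕ) → (π i : ℕ) = n - 1 - (i : ℕ))))) ∧
    Set.ncard {π : Equiv.Perm (Fin n) |
      (¬ (∃ (i j : Fin n) (h : (j : ℕ) + 1 < n), i < j ∧ π i < π j ∧ π j < π ⟨(j : ℕ) + 1, h⟩)) ∧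
      (¬ (∃ (i j : Fin n) (h : (j : ℕ) + 1 < n), i < j ∧ π j < π i ∧ π i < π ⟨(j : ℕ) + 1, h⟩)) ∧
      (¬ (∃ (i j : Fin n) (h : (j : ℕ) + 1 < n), i < j ∧ π i < π ⟨(j : ℕ) + 1, h⟩ ∧ π ⟨(j : ℕ) + 1, h⟩ < π j)) ∧
      (¬ (∃ (i j : Fin n) (h : (j : ℕ) + 1 < n), i < j ∧ π j < π ⟨(j : ℕ) + 1, h⟩ ∧ π ⟨(j : ℕ) + 1, h⟩ < π i))} = 2 := by
  have key : ∀ π : Equiv.Perm (Fin n), Avoids π ↔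
      ((∀ i : Fin n, (π i : ℕ) = n - 1 - (i : ℕ)) ∨
      (∀ i : Fin n, ((i : ℕ) = 0 → (π i : ℕ) = n - 2) ∧ ((i : ℕ) = 1 → (π i : ℕ) = n - 1) ∧
        (2 ≤ (i : ℕ) → (π i : ℕ) = n - 1 - (i : ℕ)))) :=
    fun π => (avoids_iff_q π).trans (q_iff hn π)
  refine ⟨key, ?_⟩
  set z : Fin n := ⟨0, by omega⟩ with hz
  set o : Fin n := ⟨1, by omega⟩ with ho
  set σ1 : Equiv.Perm (Fin n) := Fin.revPerm with hσ1
  set σ2 : Equiv.Perm (Fin n) := (Equiv.swap z o).trans Fin.revPerm with hσ2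
  have v1 : ∀ i : Fin n, (σ1 i : ℕ) = n - 1 - (i : ℕ) := by
    intro i
    simp [hσ1, Fin.revPerm, Fin.rev]
    omega
  have v2 : ∀ i : Fin n, ((i : ℕ) = 0 → (σ2 i : ℕ) = n - 2) ∧ ((i : ℕ) = 1 → (σ2 i : ℕ) = n - 1) ∧
      (2 ≤ (i : ℕ) → (σ2 i : ℕ) = n - 1 - (i : ℕ)) := by
    intro i
    refine ⟨fun h => ?_, fun h => ?_, fun h => ?_⟩
    · have : i = z := Fin.ext (by simp [hz, h])
      rw [this]
      simp [hσ2, Equiv.swap_apply_left, Fin.rev, hz, ho]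
    · have : i = o := Fin.ext (by simp [ho, h])
      rw [this]
      simp [hσ2, Equiv.swap_apply_right, Fin.rev, hz, ho]
      try omega
    · have hiz : i ≠ z := by intro e; rw [e] at h; simp [hz] at h
      have hio : i ≠ o := by intro e; rw [e] at h; simp [ho] at h
      simp [hσ2, Equiv.swap_apply_of_ne_of_ne hiz hio, Fin.rev]
      omega
  have hset : {π : Equiv.Perm (Fin n) |
      (¬ (∃ (i j : Fin n) (h : (j : ℕ) + 1 < n), i < j ∧ π i < π j ∧ π j < π ⟨(j : ℕ) + 1, h⟩)) ∧
      (¬ (∃ (i j : Fin n) (h : (j : ℕ) + 1 < n), i < j ∧ π j < π i ∧ π i < π ⟨(j : ℕ) + 1, h⟩)) ∧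
      (¬ (∃ (i j : Fin n) (h : (j : ℕ) + 1 < n), i < j ∧ π i < π ⟨(j : ℕ) + 1, h⟩ ∧ π ⟨(j : ℕ) + 1, h⟩ < π j)) ∧
      (¬ (∃ (i j : Fin n) (h : (j : ℕ) + 1 < n), i < j ∧ π j < π ⟨(j : ℕ) + 1, h⟩ ∧ π ⟨(j : ℕ) + 1, h⟩ < π i))}
      = {σ1, σ2} := by
    ext π
    simp only [Set.mem_setOf_eq, Set.mem_insert_iff, Set.mem_singleton_iff]
    rw [show ((¬ (∃ (i j : Fin n) (h : (j : ℕ) + 1 < n), i < j ∧ π i < π j ∧ π j < π ⟨(j : ℕ) + 1, h⟩)) ∧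
      (¬ (∃ (i j : Fin n) (h : (j : ℕ) + 1 < n), i < j ∧ π j < π i ∧ π i < π ⟨(j : ℕ) + 1, h⟩)) ∧
      (¬ (∃ (i j : Fin n) (h : (j : ℕ) + 1 < n), i < j ∧ π i < π ⟨(j : ℕ) + 1, h⟩ ∧ π ⟨(j : ℕ) + 1, h⟩ < π j)) ∧
      (¬ (∃ (i j : Fin n) (h : (j : ℕ) + 1 < n), i < j ∧ π j < π ⟨(j : ℕ) + 1, h⟩ ∧ π ⟨(j : ℕ) + 1, h⟩ < π i))) = Avoids π from rfl]
    rw [key π]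
    constructor
    · rintro (h | h)
      · left
        exact Equiv.ext fun i => Fin.ext (by rw [h i, ← v1 i])
      · right
        refine Equiv.ext fun i => Fin.ext ?_
        obtain ⟨a0, a1, a2⟩ := h i
        obtain ⟨b0, b1, b2⟩ := v2 i
        rcases Nat.lt_or_ge (i : ℕ) 2 with hi | hi
        · interval_cases hii : (i : ℕ)
          · rw [a0 rfl, b0 rfl]
          · rw [a1 rfl, b1 rfl]
        · rw [a2 hi, b2 hi]
    · rintro (rfl | rfl)
      · exact Or.inl v1
      · exact Or.inr v2
  rw [hset]
  apply Set.ncard_pair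
  intro e
  have h1 := v1 z
  have h2 := (v2 z).1 (by simp [hz])
  rw [e] at h1
  simp [hz] at h1 h2
  omega
end

section
/- Let n ≥ 2. A permutation π of {1,...,n} avoids the four patterns 1-23, 2-13, 2-31, and 3-12 if and only if π equals n (n−1) ... 2 1 or 1 n (n−1) ... 3 2. In particular, there are exactly 2 such permutations of each length n ≥ 2. -/
private lemma desc_bound (n s : ℕ) (p : ℕ → ℕ)
    (hd : ∀ j, s ≤ j → j + 1 < n → p (j + 1) < p j) :
    ∀ d j, s ≤ j → j + d < n → p (j + d) + d ≤ p j := by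
  intro d
  induction d with
  | zero => intro j _ _; simp
  | succ d ih =>
    intro j hj hjd
    have h1 := hd (j + d) (by omega) (by omega)
    have h2 := ih j hj (by omega)
    have he : j + (d + 1) = (j + d) + 1 := by ring
    rw [he]
    omega

private def rev2 (n : ℕ) : Fin n → Fin n := fun i =>
  if h : (i : ℕ) = 0 then i else ⟨n - (i : ℕ), Nat.sub_lt i.pos (Nat.pos_of_ne_zero h)⟩

private lemma rev2_invol (n : ℕ) : Function.Involutive (rev2 n) := by
  intro i
  unfold rev2
  by_cases h : (i : ℕ) = 0
  · simp [h]
  · have hi := i.isLt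
    have hne : ¬ (n - (i : ℕ) = 0) := by omega
    simp only [dif_neg h, dif_neg hne]
    apply Fin.ext
    simp
    omega

private def sigma2 (n : ℕ) : Equiv.Perm (Fin n) :=
  Function.Involutive.toPerm (rev2 n) (rev2_invol n)

private lemma main_iff (n : ℕ) (hn : 2 ≤ n) (π : Equiv.Perm (Fin n)) :
    ((¬ (∃ (i j : Fin n) (h : (j : ℕ) + 1 < n), i < j ∧ π i < π j ∧ π j < π ⟨(j : ℕ) + 1, h⟩)) ∧
      (¬ (∃ (i j : Fin n) (h : (j : ℕ) + 1 < n), i < j ∧ π j < π i ∧ π i < π ⟨(j : ℕ) + 1, h⟩)) ∧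
      (¬ (∃ (i j : Fin n) (h : (j : ℕ) + 1 < n), i < j ∧ π ⟨(j : ℕ) + 1, h⟩ < π i ∧ π i < π j)) ∧
      (¬ (∃ (i j : Fin n) (h : (j : ℕ) + 1 < n), i < j ∧ π j < π ⟨(j : ℕ) + 1, h⟩ ∧ π ⟨(j : ℕ) + 1, h⟩ < π i)))
      ↔
      ((∀ i : Fin n, (π i : ℕ) = n - 1 - (i : ℕ)) ∨
      (∀ i : Fin n, ((i : ℕ) = 0 → (π i : ℕ) = 0) ∧ (1 ≤ (i : ℕ) → (π i : ℕ) = n - (i : ℕ)))) := by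
  constructor
  · rintro ⟨h1, h2, h3, h4⟩
    have hinj : ∀ (a b : Fin n), (π a : ℕ) = (π b : ℕ) → (a : ℕ) = (b : ℕ) := by
      intro a b hab
      exact congrArg Fin.val (π.injective (Fin.ext hab))
    set p : ℕ → ℕ := fun k => if h : k < n then (π ⟨k, h⟩ : ℕ) else 0 with hp
    have hpv : ∀ (k : ℕ) (h : k < n), p k = (π ⟨k, h⟩ : ℕ) := by
      intro k h; simp [hp, h]
    have hpv' : ∀ i : Fin n, p (i : ℕ) = (π i : ℕ) := by
      intro i
      have := hpv (i : ℕ) i.isLt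
      simpa using this
    have hplt : ∀ k, k < n → p k < n := by
      intro k h; rw [hpv k h]; exact (π ⟨k, h⟩).isLt
    have hpinj : ∀ a b, a < n → b < n → p a = p b → a = b := by
      intro a b ha hb hab
      rw [hpv a ha, hpv b hb] at hab
      exact hinj _ _ hab
    have h0n : (0 : ℕ) < n := by omega
    have hdesc : ∀ j, 1 ≤ j → j + 1 < n → p (j + 1) < p j := by
      intro j hj1 hjn
      have hjlt : j < n := by omega
      have ej := hpv j hjlt
      have ej1 := hpv (j + 1) hjn
      have e0 := hpv 0 h0n
      by_contra hcon
      push_neg at hcon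
      have hnebc : (π ⟨j, hjlt⟩ : ℕ) ≠ (π ⟨j + 1, hjn⟩ : ℕ) := by
        intro he; have := hpinj j (j + 1) hjlt hjn (by omega); omega
      have hneab : (π ⟨0, h0n⟩ : ℕ) ≠ (π ⟨j, hjlt⟩ : ℕ) := by
        intro he; have := hpinj 0 j h0n hjlt (by omega); omega
      have hneac : (π ⟨0, h0n⟩ : ℕ) ≠ (π ⟨j + 1, hjn⟩ : ℕ) := by
        intro he; have := hpinj 0 (j + 1) h0n hjn (by omega); omega
      have hij : (⟨0, h0n⟩ : Fin n) < ⟨j, hjlt⟩ := Fin.mk_lt_mk.mpr (by omega)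
      have hbc : π ⟨j, hjlt⟩ < π ⟨j + 1, hjn⟩ := Fin.lt_def.mpr (by omega)
      rcases Nat.lt_trichotomy ((π ⟨0, h0n⟩ : ℕ)) ((π ⟨j, hjlt⟩ : ℕ)) with hab | hab | hab
      · exact h1 ⟨⟨0, h0n⟩, ⟨j, hjlt⟩, hjn, hij, Fin.lt_def.mpr hab, hbc⟩
      · exact absurd hab hneab
      · rcases Nat.lt_trichotomy ((π ⟨0, h0n⟩ : ℕ)) ((π ⟨j + 1, hjn⟩ : ℕ)) with hac | hac | hac
        · exact h2 ⟨⟨0, h0n⟩, ⟨j, hjlt⟩, hjn, hij, Fin.lt_def.mpr hab, Fin.lt_def.mpr hac⟩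
        · exact absurd hac hneac
        · exact h4 ⟨⟨0, h0n⟩, ⟨j, hjlt⟩, hjn, hij, hbc, Fin.lt_def.mpr hac⟩
    have hbound := desc_bound n 1 p hdesc
    have hlow : ∀ j, 1 ≤ j → j < n → n - 1 - j ≤ p j := by
      intro j hj1 hjn
      have := hbound (n - 1 - j) j hj1 (by omega)
      omega
    have hupp : ∀ j, 1 ≤ j → j < n → p j + (j - 1) ≤ p 1 := by
      intro j hj1 hjn
      have h := hbound (j - 1) 1 (le_refl 1) (by omega)
      have he : 1 + (j - 1) = j := by omega
      rw [he] at h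
      exact h
    have hp1lt : p 1 < n := hplt 1 (by omega)
    have hp0lt : p 0 < n := hplt 0 (by omega)
    have hne01 : p 0 ≠ p 1 := by
      intro he; have := hpinj 0 1 (by omega) (by omega) he; omega
    rcases Nat.lt_or_ge (p 1) (p 0) with hcase | hcase
    · -- descending everywhere : π = n-1, ..., 0
      left
      have hdesc0 : ∀ j, 0 ≤ j → j + 1 < n → p (j + 1) < p j := by
        intro j _ hj
        rcases Nat.eq_zero_or_pos j with h | h
        · subst h; simpa using hcase
        · exact hdesc j h hj
      have hb0 := desc_bound n 0 p hdesc0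
      intro i
      have hilt := i.isLt
      have hlow0 := hb0 (n - 1 - (i : ℕ)) (i : ℕ) (by omega) (by omega)
      rw [show (i : ℕ) + (n - 1 - (i : ℕ)) = n - 1 from by omega] at hlow0
      have hup0 := hb0 (i : ℕ) 0 (by omega) (by omega)
      rw [Nat.zero_add] at hup0
      have := hpv' i
      omega
    · -- p 0 < p 1
      have hcase' : p 0 < p 1 := by omega
      have hl1 := hlow 1 (le_refl 1) (by omega)
      by_cases hc : p 1 = n - 2
      · exfalso
        have hall : ∀ j, 1 ≤ j → j < n → p j = n - 1 - j := by
          intro j hj1 hjn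
          have := hlow j hj1 hjn
          have := hupp j hj1 hjn
          omega
        have hj := hall (n - 1 - p 0) (by omega) (by omega)
        have := hpinj (n - 1 - p 0) 0 (by omega) (by omega) (by omega)
        omega
      · have hc1 : p 1 = n - 1 := by omega
        have hrange : ∀ j, 1 ≤ j → j < n → n - 1 - j ≤ p j ∧ p j ≤ n - j := by
          intro j hj1 hjn
          have := hlow j hj1 hjn
          have := hupp j hj1 hjn
          omega
        have hp00 : p 0 = 0 := by
          by_contra h0
          have h0u : p 0 ≤ n - 2 := by omega
          set j := n - 1 - p 0 with hjdef
          have hj1 : 1 ≤ j := by omega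
          have hjn : j + 1 < n := by omega
          have hjlt : j < n := by omega
          have hbj := hrange j hj1 hjlt
          have hbj1 := hrange (j + 1) (by omega) (by omega)
          have hjne : p j ≠ p 0 := by
            intro he; have := hpinj j 0 (by omega) (by omega) he; omega
          have hj1ne : p (j + 1) ≠ p 0 := by
            intro he; have := hpinj (j + 1) 0 (by omega) (by omega) he; omega
          have e0 := hpv 0 h0n
          have ej := hpv j hjlt
          have ej1 := hpv (j + 1) hjn
          have l1 : π ⟨j + 1, hjn⟩ < π ⟨0, h0n⟩ := Fin.lt_def.mpr (by omega)
          have l2 : π ⟨0, h0n⟩ < π ⟨j, hjlt⟩ := Fin.lt_def.mpr (by omega)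
          exact h3 ⟨⟨0, h0n⟩, ⟨j, hjlt⟩, hjn, Fin.mk_lt_mk.mpr (by omega), l1, l2⟩
        have hlast : p (n - 1) = 1 := by
          have := hrange (n - 1) (by omega) (by omega)
          have hne : p (n - 1) ≠ 0 := by
            intro he
            have := hpinj (n - 1) 0 (by omega) (by omega) (by omega)
            omega
          omega
        right
        intro i
        constructor
        · intro hi0
          have h := hpv' i
          rw [hi0] at h
          omega
        · intro hi1
          have hilt := i.isLt
          have h := hbound (n - 1 - (i : ℕ)) (i : ℕ) hi1 (by omega)
          rw [show (i : ℕ) + (n - 1 - (i : ℕ)) = n - 1 from by omega] at h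
          have hu := hupp (i : ℕ) hi1 hilt
          have := hpv' i
          omega
  · rintro (hR | hR)
    · refine ⟨?_, ?_, ?_, ?_⟩ <;>
      · rintro ⟨i, j, h, hij, hl1, hl2⟩
        have hi := i.isLt
        have hj := j.isLt
        have e1 := hR i
        have e2 := hR j
        have e3 := hR ⟨(j : ℕ) + 1, h⟩
        have hmk : ((⟨(j : ℕ) + 1, h⟩ : Fin n) : ℕ) = (j : ℕ) + 1 := rfl
        simp only [Fin.lt_def] at hij hl1 hl2
        omega
    · refine ⟨?_, ?_, ?_, ?_⟩ <;>
      · rintro ⟨i, j, h, hij, hl1, hl2⟩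
        have hi := i.isLt
        have hj := j.isLt
        have hmk : ((⟨(j : ℕ) + 1, h⟩ : Fin n) : ℕ) = (j : ℕ) + 1 := rfl
        simp only [Fin.lt_def] at hij hl1 hl2
        have e2 := (hR j).2 (by omega)
        have e3 := (hR ⟨(j : ℕ) + 1, h⟩).2 (by rw [hmk]; omega)
        rcases Nat.eq_zero_or_pos (i : ℕ) with h0 | h0
        · have e1 := (hR i).1 h0
          omega
        · have e1 := (hR i).2 h0
          omega

private lemma sigma1_spec (n : ℕ) : ∀ i : Fin n, ((Fin.revPerm i : Fin n) : ℕ) = n - 1 - (i : ℕ) := by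
  intro i
  simp [Fin.revPerm, Fin.rev]
  omega

private lemma sigma2_spec (n : ℕ) :
    ∀ i : Fin n, ((i : ℕ) = 0 → ((sigma2 n) i : ℕ) = 0) ∧
      (1 ≤ (i : ℕ) → ((sigma2 n) i : ℕ) = n - (i : ℕ)) := by
  intro i
  have hco : (sigma2 n) i = rev2 n i := rfl
  constructor
  · intro h0
    rw [hco]
    unfold rev2
    simp [h0]
  · intro h1
    rw [hco]
    unfold rev2
    rw [dif_neg (by omega)]

private lemma uniq_of_spec (n : ℕ) (π σ : Equiv.Perm (Fin n))
    (h : ∀ i : Fin n, (π i : ℕ) = (σ i : ℕ)) : π = σ := by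
  apply Equiv.ext
  intro i
  exact Fin.ext (h i)

theorem stmt_14 (n : ℕ) (hn : 2 ≤ n) :
    (∀ π : Equiv.Perm (Fin n),
      ((¬ (∃ (i j : Fin n) (h : (j : ℕ) + 1 < n), i < j ∧ π i < π j ∧ π j < π ⟨(j : ℕ) + 1, h⟩)) ∧
      (¬ (∃ (i j : Fin n) (h : (j : ℕ) + 1 < n), i < j ∧ π j < π i ∧ π i < π ⟨(j : ℕ) + 1, h⟩)) ∧
      (¬ (∃ (i j : Fin n) (h : (j : ℕ) + 1 < n), i < j ∧ π ⟨(j : ℕ) + 1, h⟩ < π i ∧ π i < π j)) ∧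
      (¬ (∃ (i j : Fin n) (h : (j : ℕ) + 1 < n), i < j ∧ π j < π ⟨(j : ℕ) + 1, h⟩ ∧ π ⟨(j : ℕ) + 1, h⟩ < π i)))
      ↔
      ((∀ i : Fin n, (π i : ℕ) = n - 1 - (i : ℕ)) ∨
      (∀ i : Fin n, ((i : ℕ) = 0 → (π i : ℕ) = 0) ∧ (1 ≤ (i : ℕ) → (π i : ℕ) = n - (i : ℕ))))) ∧
    Set.ncard {π : Equiv.Perm (Fin n) |
      (¬ (∃ (i j : Fin n) (h : (j : ℕ) + 1 < n), i < j ∧ π i < π j ∧ π j < π ⟨(j : ℕ) + 1, h⟩)) ∧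
      (¬ (∃ (i j : Fin n) (h : (j : ℕ) + 1 < n), i < j ∧ π j < π i ∧ π i < π ⟨(j : ℕ) + 1, h⟩)) ∧
      (¬ (∃ (i j : Fin n) (h : (j : ℕ) + 1 < n), i < j ∧ π ⟨(j : ℕ) + 1, h⟩ < π i ∧ π i < π j)) ∧
      (¬ (∃ (i j : Fin n) (h : (j : ℕ) + 1 < n), i < j ∧ π j < π ⟨(j : ℕ) + 1, h⟩ ∧ π ⟨(j : ℕ) + 1, h⟩ < π i))} = 2 := by
  refine ⟨fun π => main_iff n hn π, ?_⟩
  have hset : {π : Equiv.Perm (Fin n) |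
      (¬ (∃ (i j : Fin n) (h : (j : ℕ) + 1 < n), i < j ∧ π i < π j ∧ π j < π ⟨(j : ℕ) + 1, h⟩)) ∧
      (¬ (∃ (i j : Fin n) (h : (j : ℕ) + 1 < n), i < j ∧ π j < π i ∧ π i < π ⟨(j : ℕ) + 1, h⟩)) ∧
      (¬ (∃ (i j : Fin n) (h : (j : ℕ) + 1 < n), i < j ∧ π ⟨(j : ℕ) + 1, h⟩ < π i ∧ π i < π j)) ∧
      (¬ (∃ (i j : Fin n) (h : (j : ℕ) + 1 < n), i < j ∧ π j < π ⟨(j : ℕ) + 1, h⟩ ∧ π ⟨(j : ℕ) + 1, h⟩ < π i))}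
      = {(Fin.revPerm : Equiv.Perm (Fin n)), sigma2 n} := by
    ext π
    rw [Set.mem_setOf_eq, main_iff n hn π, Set.mem_insert_iff, Set.mem_singleton_iff]
    constructor
    · rintro (h | h)
      · exact Or.inl (uniq_of_spec n π _ (fun i => by rw [h i, sigma1_spec n i]))
      · refine Or.inr (uniq_of_spec n π _ (fun i => ?_))
        rcases Nat.eq_zero_or_pos (i : ℕ) with h0 | h0
        · rw [(h i).1 h0, (sigma2_spec n i).1 h0]
        · rw [(h i).2 h0, (sigma2_spec n i).2 h0]
    · rintro (rfl | rfl)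
      · exact Or.inl (sigma1_spec n)
      · exact Or.inr (sigma2_spec n)
  rw [hset]
  apply Set.ncard_pair
  intro he
  have h0 : (0 : ℕ) < n := by omega
  have := congrArg (fun σ : Equiv.Perm (Fin n) => ((σ ⟨0, h0⟩ : Fin n) : ℕ)) he
  rw [sigma1_spec n ⟨0, h0⟩, ((sigma2_spec n ⟨0, h0⟩).1 rfl)] at this
  have hmk : ((⟨0, h0⟩ : Fin n) : ℕ) = 0 := rfl
  omega
end

section
/- Let n ≥ 2. A permutation π of {1,...,n} avoids the four patterns 1-23, 2-13, 2-31, and 1-32 if and only if π equals n (n−1) ... 3 2 1 or n (n−1) ... 3 1 2. In particular, there are exactly 2 such permutations of each length n ≥ 2. -/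
namespace Stmt15

def dp (n : ℕ) : Equiv.Perm (Fin n) where
  toFun i := ⟨n - 1 - i, by have := i.isLt; omega⟩
  invFun i := ⟨n - 1 - i, by have := i.isLt; omega⟩
  left_inv i := by have := i.isLt; exact Fin.ext (by simp only [Fin.val_mk]; omega)
  right_inv i := by have := i.isLt; exact Fin.ext (by simp only [Fin.val_mk]; omega)

lemma dp_val {n : ℕ} (i : Fin n) : (dp n i : ℕ) = n - 1 - i := rfl

def dp2 (n : ℕ) (hn : 2 ≤ n) : Equiv.Perm (Fin n) :=
  (dp n).trans (Equiv.swap ⟨0, by omega⟩ ⟨1, by omega⟩)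

lemma dp2_val {n : ℕ} (hn : 2 ≤ n) (i : Fin n) :
    (dp2 n hn i : ℕ) =
      if (i : ℕ) + 3 ≤ n then n - 1 - (i : ℕ) else if (i : ℕ) = n - 2 then 0 else 1 := by
  have hi := i.isLt
  show ((Equiv.swap (⟨0, by omega⟩ : Fin n) ⟨1, by omega⟩) (dp n i) : ℕ) = _
  rw [Equiv.swap_apply_def]
  have e0 : (dp n i = (⟨0, by omega⟩ : Fin n)) ↔ n - 1 - (i:ℕ) = 0 := by
    rw [Fin.ext_iff]; simp only [dp_val, Fin.val_mk]
  have e1 : (dp n i = (⟨1, by omega⟩ : Fin n)) ↔ n - 1 - (i:ℕ) = 1 := by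
    rw [Fin.ext_iff]; simp only [dp_val, Fin.val_mk]
  by_cases h3 : (i : ℕ) + 3 ≤ n
  · rw [if_neg (by rw [e0]; omega), if_neg (by rw [e1]; omega), if_pos h3, dp_val]
  · by_cases h2 : (i : ℕ) = n - 2
    · rw [if_neg (by rw [e0]; omega), if_pos (e1.mpr (by omega)), if_neg h3, if_pos h2]
    · rw [if_pos (e0.mpr (by omega)), if_neg h3, if_neg h2]


def QQ (n : ℕ) (π : Equiv.Perm (Fin n)) : Prop :=
  ∀ i k : Fin n, (((i:ℕ) < (k:ℕ) ∧ (k:ℕ) + 1 < n) ∨ (i:ℕ) + 1 < (k:ℕ)) → π k < π i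

def Cond (n : ℕ) (π : Equiv.Perm (Fin n)) : Prop :=
  (¬ (∃ (i j : Fin n) (h : (j : ℕ) + 1 < n), i < j ∧ π i < π j ∧ π j < π ⟨(j : ℕ) + 1, h⟩)) ∧
  (¬ (∃ (i j : Fin n) (h : (j : ℕ) + 1 < n), i < j ∧ π j < π i ∧ π i < π ⟨(j : ℕ) + 1, h⟩)) ∧
  (¬ (∃ (i j : Fin n) (h : (j : ℕ) + 1 < n), i < j ∧ π ⟨(j : ℕ) + 1, h⟩ < π i ∧ π i < π j)) ∧
  (¬ (∃ (i j : Fin n) (h : (j : ℕ) + 1 < n), i < j ∧ π i < π ⟨(j : ℕ) + 1, h⟩ ∧ π ⟨(j : ℕ) + 1, h⟩ < π j))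

lemma cond_iff_QQ (n : ℕ) (π : Equiv.Perm (Fin n)) : Cond n π ↔ QQ n π := by
  constructor
  · rintro ⟨h1, h2, h3, h4⟩ i k hc
    rcases hc with ⟨hik, hk1⟩ | hik
    · -- j := k, use k+1
      set k1 : Fin n := ⟨(k:ℕ) + 1, hk1⟩ with hk1def
      have hik' : i < k := hik
      rcases lt_trichotomy (π k) (π i) with h | h | h
      · exact h
      · exact absurd (π.injective h) (by intro he; rw [he] at hik'; exact lt_irrefl _ hik')
      · exfalso
        rcases lt_trichotomy (π k) (π k1) with hh | hh | hh
        · exact h1 ⟨i, k, hk1, hik', h, hh⟩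
        · have h5 := π.injective hh
          rw [Fin.ext_iff] at h5
          have h7 : (k1:ℕ) = (k:ℕ) + 1 := rfl
          omega
        · rcases lt_trichotomy (π i) (π k1) with hh2 | hh2 | hh2
          · exact h4 ⟨i, k, hk1, hik', hh2, hh⟩
          · have h5 := π.injective hh2
            rw [Fin.ext_iff] at h5
            have h7 : (k1:ℕ) = (k:ℕ) + 1 := rfl
            have h6 := Fin.lt_def.mp hik'
            omega
          · exact h3 ⟨i, k, hk1, hik', hh2, h⟩
    · -- j := k - 1
      have hkn := k.isLt
      have hjlt : (k:ℕ) - 1 < n := by omega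
      set j : Fin n := ⟨(k:ℕ) - 1, hjlt⟩ with hjdef
      have hj1 : (j:ℕ) + 1 < n := by simp [hjdef]; omega
      have hjk : (⟨(j:ℕ) + 1, hj1⟩ : Fin n) = k := Fin.ext (by simp [hjdef]; omega)
      have hij : i < j := by rw [Fin.lt_def]; simp [hjdef]; omega
      rcases lt_trichotomy (π k) (π i) with h | h | h
      · exact h
      · have := congrArg Fin.val (π.injective h)
        omega
      · exfalso
        rcases lt_trichotomy (π j) (π i) with hh | hh | hh
        · exact h2 ⟨i, j, hj1, hij, hh, by rw [hjk]; exact h⟩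
        · have := congrArg Fin.val (π.injective hh)
          simp [hjdef] at this
          omega
        · rcases lt_trichotomy (π j) (π k) with hh2 | hh2 | hh2
          · exact h1 ⟨i, j, hj1, hij, hh, by rw [hjk]; exact hh2⟩
          · have := congrArg Fin.val (π.injective hh2)
            simp [hjdef] at this
            omega
          · exact h4 ⟨i, j, hj1, hij, by rw [hjk]; exact h, by rw [hjk]; exact hh2⟩
  · intro hQ
    refine ⟨?_, ?_, ?_, ?_⟩
    · rintro ⟨i, j, h, hij, ha, hb⟩
      exact absurd (hQ i j (Or.inl ⟨hij, h⟩)) (not_lt.mpr (le_of_lt ha))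
    · rintro ⟨i, j, h, hij, ha, hb⟩
      have : π ⟨(j:ℕ)+1, h⟩ < π i := hQ i ⟨(j:ℕ)+1, h⟩ (Or.inr (by have := Fin.lt_def.mp hij; simp; omega))
      exact absurd hb (not_lt.mpr (le_of_lt this))
    · rintro ⟨i, j, h, hij, ha, hb⟩
      exact absurd (hQ i j (Or.inl ⟨hij, h⟩)) (not_lt.mpr (le_of_lt hb))
    · rintro ⟨i, j, h, hij, ha, hb⟩
      exact absurd (hQ i j (Or.inl ⟨hij, h⟩)) (not_lt.mpr (le_of_lt (ha.trans hb)))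

lemma QQ_vals {n : ℕ} (π : Equiv.Perm (Fin n)) (hQ : QQ n π) :
    ∀ m : ℕ, m + 3 ≤ n → ∀ (hm : m < n), (π ⟨m, hm⟩ : ℕ) = n - 1 - m := by
  intro m
  induction m using Nat.strong_induction_on with
  | _ m ih =>
    intro hm3 hm
    set v : Fin n := ⟨n - 1 - m, by omega⟩ with hv
    have hvval : (v : ℕ) = n - 1 - m := rfl
    set t := π.symm v with ht
    have hπt : π t = v := π.apply_symm_apply v
    have htn := t.isLt
    rcases lt_trichotomy (t : ℕ) m with h | h | h
    · exfalso
      have h1 := ih (t : ℕ) h (by omega) t.isLt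
      rw [show (⟨(t:ℕ), t.isLt⟩ : Fin n) = t from Fin.ext rfl, hπt, hvval] at h1
      omega
    · have : (⟨m, hm⟩ : Fin n) = t := Fin.ext h.symm
      rw [this, hπt, hvval]
    · exfalso
      have hlt : π t < π ⟨m, hm⟩ := by
        refine hQ ⟨m, hm⟩ t ?_
        by_cases h2 : (t:ℕ) + 1 < n
        · exact Or.inl ⟨h, h2⟩
        · exact Or.inr (by simp; omega)
      rw [hπt] at hlt
      have hlt' : (v : ℕ) < (π ⟨m, hm⟩ : ℕ) := Fin.lt_def.mp hlt
      rw [hvval] at hlt'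
      have hub := (π ⟨m, hm⟩).isLt
      rcases Nat.eq_zero_or_pos m with hm0 | hm0
      · omega
      · have hprev := ih (m - 1) (by omega) (by omega) (by omega)
        have hlt2 : π ⟨m, hm⟩ < π ⟨m - 1, by omega⟩ :=
          hQ ⟨m - 1, by omega⟩ ⟨m, hm⟩ (Or.inl (by constructor <;> simp <;> omega))
        have := Fin.lt_def.mp hlt2
        omega

lemma QQ_small {n : ℕ} (hn : 2 ≤ n) (π : Equiv.Perm (Fin n)) (hQ : QQ n π)
    (p : ℕ) (hp : p = n - 2 ∨ p = n - 1) (hpn : p < n) : (π ⟨p, hpn⟩ : ℕ) ≤ 1 := by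
  by_contra hcon
  push_neg at hcon
  have han := (π ⟨p, hpn⟩).isLt
  set a := (π ⟨p, hpn⟩ : ℕ) with hadef
  have hval : (π ⟨n - 1 - a, by omega⟩ : ℕ) = n - 1 - (n - 1 - a) :=
    QQ_vals π hQ (n - 1 - a) (by omega) (by omega)
  have h2 : (π ⟨n - 1 - a, by omega⟩ : ℕ) = a := by omega
  have hxy : π ⟨n - 1 - a, by omega⟩ = π ⟨p, hpn⟩ := Fin.ext h2
  have h6 := π.injective hxy
  rw [Fin.ext_iff] at h6
  simp only [Fin.val_mk] at h6
  omega

lemma QQ_rhs {n : ℕ} (hn : 2 ≤ n) (π : Equiv.Perm (Fin n)) (hQ : QQ n π) :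
    (∀ i : Fin n, (π i : ℕ) = n - 1 - (i : ℕ)) ∨
      (∀ i : Fin n, ((i : ℕ) + 3 ≤ n → (π i : ℕ) = n - 1 - (i : ℕ)) ∧
        ((i : ℕ) = n - 2 → (π i : ℕ) = 0) ∧ ((i : ℕ) = n - 1 → (π i : ℕ) = 1)) := by
  have ha := QQ_small hn π hQ (n - 2) (Or.inl rfl) (by omega)
  have hb := QQ_small hn π hQ (n - 1) (Or.inr rfl) (by omega)
  have hne : π ⟨n - 2, by omega⟩ ≠ π ⟨n - 1, by omega⟩ := by
    intro he
    have h5 := π.injective he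
    rw [Fin.ext_iff] at h5
    simp only [Fin.val_mk] at h5
    omega
  have hne' : (π ⟨n - 2, by omega⟩ : ℕ) ≠ (π ⟨n - 1, by omega⟩ : ℕ) :=
    fun he => hne (Fin.ext he)
  by_cases hcase : (π ⟨n - 2, by omega⟩ : ℕ) = 1
  · left
    intro i
    have hin := i.isLt
    by_cases h3 : (i : ℕ) + 3 ≤ n
    · exact QQ_vals π hQ (i : ℕ) h3 hin ▸ congrArg (fun x => (π x : ℕ)) (Fin.ext rfl)
    · by_cases h2 : (i : ℕ) = n - 2
      · have : i = ⟨n - 2, by omega⟩ := Fin.ext (show (i:ℕ) = n - 2 from h2)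
        rw [this, hcase]
        simp only [Fin.val_mk]
        omega
      · have : i = ⟨n - 1, by omega⟩ := Fin.ext (show (i:ℕ) = n - 1 by omega)
        rw [this]
        simp only [Fin.val_mk]
        omega
  · right
    intro i
    have hin := i.isLt
    refine ⟨fun h3 => ?_, fun h2 => ?_, fun h1 => ?_⟩
    · have := QQ_vals π hQ (i : ℕ) h3 hin
      rwa [show (⟨(i:ℕ), hin⟩ : Fin n) = i from Fin.ext rfl] at this
    · have : i = ⟨n - 2, by omega⟩ := Fin.ext (show (i:ℕ) = n - 2 from h2)
      rw [this]
      omega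
    · have : i = ⟨n - 1, by omega⟩ := Fin.ext (show (i:ℕ) = n - 1 from h1)
      rw [this]
      omega

lemma rhs_QQ {n : ℕ} (hn : 2 ≤ n) (π : Equiv.Perm (Fin n))
    (h : (∀ i : Fin n, (π i : ℕ) = n - 1 - (i : ℕ)) ∨
      (∀ i : Fin n, ((i : ℕ) + 3 ≤ n → (π i : ℕ) = n - 1 - (i : ℕ)) ∧
        ((i : ℕ) = n - 2 → (π i : ℕ) = 0) ∧ ((i : ℕ) = n - 1 → (π i : ℕ) = 1))) :
    QQ n π := by
  rcases h with h | h
  · intro i k hc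
    rw [Fin.lt_def, h i, h k]
    have := i.isLt
    have := k.isLt
    omega
  · intro i k hc
    rw [Fin.lt_def]
    obtain ⟨hi1, hi2, hi3⟩ := h i
    obtain ⟨hk1, hk2, hk3⟩ := h k
    have hin := i.isLt
    have hkn := k.isLt
    have hiv : ((i:ℕ) + 3 ≤ n ∧ (π i : ℕ) = n - 1 - i) ∨ ((i:ℕ) = n - 2 ∧ (π i : ℕ) = 0) ∨
        ((i:ℕ) = n - 1 ∧ (π i : ℕ) = 1) := by
      by_cases h3 : (i:ℕ) + 3 ≤ n
      · exact Or.inl ⟨h3, hi1 h3⟩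
      · by_cases h2 : (i:ℕ) = n - 2
        · exact Or.inr (Or.inl ⟨h2, hi2 h2⟩)
        · exact Or.inr (Or.inr ⟨by omega, hi3 (by omega)⟩)
    have hkv : ((k:ℕ) + 3 ≤ n ∧ (π k : ℕ) = n - 1 - k) ∨ ((k:ℕ) = n - 2 ∧ (π k : ℕ) = 0) ∨
        ((k:ℕ) = n - 1 ∧ (π k : ℕ) = 1) := by
      by_cases h3 : (k:ℕ) + 3 ≤ n
      · exact Or.inl ⟨h3, hk1 h3⟩
      · by_cases h2 : (k:ℕ) = n - 2
        · exact Or.inr (Or.inl ⟨h2, hk2 h2⟩)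
        · exact Or.inr (Or.inr ⟨by omega, hk3 (by omega)⟩)
    omega


lemma rhs_left_iff {n : ℕ} (π : Equiv.Perm (Fin n)) :
    (∀ i : Fin n, (π i : ℕ) = n - 1 - (i : ℕ)) ↔ π = dp n := by
  constructor
  · intro h
    exact Equiv.ext fun i => Fin.ext (by rw [h i, dp_val])
  · rintro rfl i
    exact dp_val i

lemma rhs_right_iff {n : ℕ} (hn : 2 ≤ n) (π : Equiv.Perm (Fin n)) :
    (∀ i : Fin n, ((i : ℕ) + 3 ≤ n → (π i : ℕ) = n - 1 - (i : ℕ)) ∧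
      ((i : ℕ) = n - 2 → (π i : ℕ) = 0) ∧ ((i : ℕ) = n - 1 → (π i : ℕ) = 1)) ↔
      π = dp2 n hn := by
  constructor
  · intro h
    refine Equiv.ext fun i => Fin.ext ?_
    rw [dp2_val hn i]
    obtain ⟨h1, h2, h3⟩ := h i
    have := i.isLt
    by_cases c1 : (i : ℕ) + 3 ≤ n
    · rw [if_pos c1]; exact h1 c1
    · by_cases c2 : (i : ℕ) = n - 2
      · rw [if_neg c1, if_pos c2]; exact h2 c2
      · rw [if_neg c1, if_neg c2]; exact h3 (by omega)
  · rintro rfl i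
    have := i.isLt
    refine ⟨fun hc => ?_, fun hc => ?_, fun hc => ?_⟩ <;> rw [dp2_val hn i]
    · rw [if_pos hc]
    · rw [if_neg (by omega), if_pos hc]
    · rw [if_neg (by omega), if_neg (by omega)]

lemma dp_ne (n : ℕ) (hn : 2 ≤ n) : dp n ≠ dp2 n hn := by
  intro he
  have h1 := congrArg (fun f : Equiv.Perm (Fin n) => (f ⟨n - 2, by omega⟩ : ℕ)) he
  rw [dp_val, dp2_val hn] at h1
  simp only [Fin.val_mk] at h1
  rw [if_neg (by omega)] at h1
  simp only [if_true] at h1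
  omega

end Stmt15

theorem stmt_15 (n : ℕ) (hn : 2 ≤ n) :
    (∀ π : Equiv.Perm (Fin n),
      ((¬ (∃ (i j : Fin n) (h : (j : ℕ) + 1 < n), i < j ∧ π i < π j ∧ π j < π ⟨(j : ℕ) + 1, h⟩)) ∧
      (¬ (∃ (i j : Fin n) (h : (j : ℕ) + 1 < n), i < j ∧ π j < π i ∧ π i < π ⟨(j : ℕ) + 1, h⟩)) ∧
      (¬ (∃ (i j : Fin n) (h : (j : ℕ) + 1 < n), i < j ∧ π ⟨(j : ℕ) + 1, h⟩ < π i ∧ π i < π j)) ∧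
      (¬ (∃ (i j : Fin n) (h : (j : ℕ) + 1 < n), i < j ∧ π i < π ⟨(j : ℕ) + 1, h⟩ ∧ π ⟨(j : ℕ) + 1, h⟩ < π j)))
      ↔
      ((∀ i : Fin n, (π i : ℕ) = n - 1 - (i : ℕ)) ∨
      (∀ i : Fin n, ((i : ℕ) + 3 ≤ n → (π i : ℕ) = n - 1 - (i : ℕ)) ∧ ((i : ℕ) = n - 2 → (π i : ℕ) = 0) ∧ ((i : ℕ) = n - 1 → (π i : ℕ) = 1)))) ∧
    Set.ncard {π : Equiv.Perm (Fin n) |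
      (¬ (∃ (i j : Fin n) (h : (j : ℕ) + 1 < n), i < j ∧ π i < π j ∧ π j < π ⟨(j : ℕ) + 1, h⟩)) ∧
      (¬ (∃ (i j : Fin n) (h : (j : ℕ) + 1 < n), i < j ∧ π j < π i ∧ π i < π ⟨(j : ℕ) + 1, h⟩)) ∧
      (¬ (∃ (i j : Fin n) (h : (j : ℕ) + 1 < n), i < j ∧ π ⟨(j : ℕ) + 1, h⟩ < π i ∧ π i < π j)) ∧
      (¬ (∃ (i j : Fin n) (h : (j : ℕ) + 1 < n), i < j ∧ π i < π ⟨(j : ℕ) + 1, h⟩ ∧ π ⟨(j : ℕ) + 1, h⟩ < π j))} = 2 := by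
  have hiff : ∀ π : Equiv.Perm (Fin n),
      Stmt15.Cond n π ↔
      ((∀ i : Fin n, (π i : ℕ) = n - 1 - (i : ℕ)) ∨
      (∀ i : Fin n, ((i : ℕ) + 3 ≤ n → (π i : ℕ) = n - 1 - (i : ℕ)) ∧
        ((i : ℕ) = n - 2 → (π i : ℕ) = 0) ∧ ((i : ℕ) = n - 1 → (π i : ℕ) = 1))) :=
    fun π => (Stmt15.cond_iff_QQ n π).trans
      ⟨Stmt15.QQ_rhs hn π, Stmt15.rhs_QQ hn π⟩
  constructor
  · exact hiff
  · have hset : {π : Equiv.Perm (Fin n) | Stmt15.Cond n π} = {Stmt15.dp n, Stmt15.dp2 n hn} := by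
      ext π
      simp only [Set.mem_setOf_eq, Set.mem_insert_iff, Set.mem_singleton_iff]
      rw [hiff π, Stmt15.rhs_left_iff π, Stmt15.rhs_right_iff hn π]
    show Set.ncard {π : Equiv.Perm (Fin n) | Stmt15.Cond n π} = 2
    rw [hset, Set.ncard_pair (Stmt15.dp_ne n hn)]
end
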